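/- arXiv:2603.02344 — 5 statements merged into one kernel-verified Lean document; each statement's English description precedes it below -/
import Mathlib

section
/- Let J, b, φ, λ be real numbers with J > 0, φ > 0, λ > 0. Then every complex root of the cubic polynomial p(s) = J s³ + (b + φ) s² + 2 φ λ s + φ λ² has strictly negative real part if and only if 2(b + φ) > J λ. -/
set_option maxHeartbeats 1000000

/-- Per-agent Routh–Hurwitz condition: every complex root of the closed-loop
cubic `p(s) = J s³ + (b + φ) s² + 2 φ λ s + φ λ²` has strictly negative real
part iff `2(b + φ) > J λ`. -/
theorem stmt_0 (J b φ lam : ℝ) (hJ : 0 < J) (hφ : 0 < φ) (hlam : 0 < lam) :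
    (∀ s : ℂ, (J : ℂ) * s ^ 3 + ((b : ℂ) + (φ : ℂ)) * s ^ 2
        + 2 * (φ : ℂ) * (lam : ℂ) * s + (φ : ℂ) * (lam : ℂ) ^ 2 = 0 → s.re < 0)
      ↔ 2 * (b + φ) > J * lam := by
  constructor
  · intro h
    obtain ⟨C, hC⟩ : ∃ C, C = |b + φ| + 2*φ*lam + φ*lam^2 := ⟨_, rfl⟩
    have hC0 : 0 ≤ C := by rw [hC]; positivity
    obtain ⟨M, hM⟩ : ∃ M, M = -(1 + C/J) := ⟨_, rfl⟩
    have hM1 : M ≤ -1 := by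
      have : 0 ≤ C / J := div_nonneg hC0 hJ.le
      rw [hM]; linarith
    have hM0 : M ≤ 0 := by linarith
    have hfM : J*M^3 + (b+φ)*M^2 + 2*φ*lam*M + φ*lam^2 < 0 := by
      have habs : b + φ ≤ |b + φ| := le_abs_self _
      have hJM : J * M = -(J + C) := by rw [hM]; field_simp
      have hM2 : 1 ≤ M^2 := by nlinarith
      have hMneg : M < 0 := by linarith
      nlinarith [mul_nonneg (mul_pos hφ hlam).le (neg_nonneg.mpr hMneg.le), sq_nonneg M,
        mul_pos hφ (mul_pos hlam hlam), abs_nonneg (b+φ),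
        mul_le_mul_of_nonneg_left hM2 (mul_pos hφ (mul_pos hlam hlam)).le]
    have hf0 : (0:ℝ) < J*0^3 + (b+φ)*0^2 + 2*φ*lam*0 + φ*lam^2 := by norm_num; positivity
    have hcont : ContinuousOn (fun x : ℝ => J*x^3 + (b+φ)*x^2 + 2*φ*lam*x + φ*lam^2)
        (Set.Icc M 0) := by fun_prop
    obtain ⟨r, hrmem, hr⟩ := intermediate_value_Icc hM0 hcont ⟨hfM.le, hf0.le⟩
    simp only at hr
    have hrc : (J : ℂ) * (r:ℂ) ^ 3 + ((b : ℂ) + (φ : ℂ)) * (r:ℂ) ^ 2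
          + 2 * (φ : ℂ) * (lam : ℂ) * (r:ℂ) + (φ : ℂ) * (lam : ℂ) ^ 2 = 0 := by
      exact_mod_cast congrArg (Complex.ofReal) hr
    have hrneg : r < 0 := by simpa using h r hrc
    obtain ⟨e, he_def⟩ : ∃ e, e = (b+φ) + J*r := ⟨_, rfl⟩
    obtain ⟨fq, hfq_def⟩ : ∃ fq, fq = 2*φ*lam + (b+φ)*r + J*r^2 := ⟨_, rfl⟩
    have hfacC : ∀ z : ℂ, (J : ℂ) * z ^ 3 + ((b : ℂ) + (φ : ℂ)) * z ^ 2
          + 2 * (φ : ℂ) * (lam : ℂ) * z + (φ : ℂ) * (lam : ℂ) ^ 2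
        = (z - (r:ℂ)) * ((J:ℂ)*z^2 + (e:ℂ)*z + (fq:ℂ)) := by
      intro z
      have h1 : (e:ℂ) = (b:ℂ)+(φ:ℂ) + (J:ℂ)*(r:ℂ) := by rw [he_def]; push_cast; ring
      have h2 : (fq:ℂ) = 2*(φ:ℂ)*(lam:ℂ) + ((b:ℂ)+(φ:ℂ))*(r:ℂ) + (J:ℂ)*(r:ℂ)^2 := by
        rw [hfq_def]; push_cast; ring
      rw [h1, h2]
      linear_combination hrc
    have hJ' : J ≠ 0 := hJ.ne'
    have hef : 0 < e ∧ 0 < fq := by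
      rcases le_or_gt 0 (e^2 - 4*J*fq) with hD | hD
      · -- two real roots
        obtain ⟨t, htdef⟩ : ∃ t, t = Real.sqrt (e^2 - 4*J*fq) := ⟨_, rfl⟩
        have ht : t^2 = e^2 - 4*J*fq := by rw [htdef]; exact Real.sq_sqrt hD
        have ht0 : 0 ≤ t := htdef ▸ Real.sqrt_nonneg _
        have hroot : ∀ x : ℝ, J*x^2 + e*x + fq = 0 → x < 0 := by
          intro x hx
          have hc : ((x:ℝ):ℂ).re < 0 := by
            apply h
            rw [hfacC]
            have : (J:ℂ)*(x:ℂ)^2 + (e:ℂ)*(x:ℂ) + (fq:ℂ) = 0 := by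
              exact_mod_cast congrArg (Complex.ofReal) hx
            rw [this, mul_zero]
          simpa using hc
        have hx1 : (-e + t)/(2*J) < 0 := by
          apply hroot
          have expand : J*((-e + t)/(2*J))^2 + e*((-e + t)/(2*J)) + fq
              = (t^2 - (e^2 - 4*J*fq))/(4*J) := by field_simp; ring
          rw [expand, ht]; simp
        have hx2 : (-e - t)/(2*J) < 0 := by
          apply hroot
          have expand : J*((-e - t)/(2*J))^2 + e*((-e - t)/(2*J)) + fq
              = (t^2 - (e^2 - 4*J*fq))/(4*J) := by field_simp; ring
          rw [expand, ht]; simp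
        have hn1 : -e + t < 0 := by
          by_contra hcon
          push_neg at hcon
          have : 0 ≤ (-e + t)/(2*J) := div_nonneg hcon (by positivity)
          linarith
        have hn2 : -e - t < 0 := by
          by_contra hcon
          push_neg at hcon
          have : 0 ≤ (-e - t)/(2*J) := div_nonneg hcon (by positivity)
          linarith
        constructor
        · linarith
        · nlinarith [mul_pos (show 0 < e - t by linarith) (show 0 < e + t by linarith), ht]
      · -- complex conjugate pair
        have hfq : 0 < fq := by nlinarith [sq_nonneg e]
        refine ⟨?_, hfq⟩
        obtain ⟨t, htdef⟩ : ∃ t, t = Real.sqrt (4*J*fq - e^2) := ⟨_, rfl⟩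
        have ht : t^2 = 4*J*fq - e^2 := by rw [htdef]; exact Real.sq_sqrt (by linarith)
        obtain ⟨X, hX⟩ : ∃ X, X = -e/(2*J) := ⟨_, rfl⟩
        obtain ⟨Y, hY⟩ : ∃ Y, Y = t/(2*J) := ⟨_, rfl⟩
        have h2JX : 2*J*X = -e := by rw [hX]; field_simp
        have h2JY : 2*J*Y = t := by rw [hY]; field_simp
        obtain ⟨z, hz⟩ : ∃ z : ℂ, z = (X : ℂ) + (Y : ℂ) * Complex.I := ⟨_, rfl⟩
        have htC : (t:ℂ)^2 = 4*(J:ℂ)*(fq:ℂ) - (e:ℂ)^2 := by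
          exact_mod_cast congrArg Complex.ofReal ht
        have hJC : (J:ℂ) ≠ 0 := by exact_mod_cast hJ'
        have hw : (2*(J:ℂ))*z = -(e:ℂ) + (t:ℂ)*Complex.I := by
          rw [hz]
          have e1 : (2*(J:ℂ))*((X : ℂ) + (Y : ℂ) * Complex.I)
              = ((2*J*X : ℝ) : ℂ) + ((2*J*Y : ℝ) : ℂ)*Complex.I := by push_cast; ring
          rw [e1, h2JX, h2JY]; push_cast; ring
        have hI : (Complex.I)^2 = -1 := Complex.I_sq
        have h4 : (4*(J:ℂ))*((J:ℂ)*z^2 + (e:ℂ)*z + (fq:ℂ)) = 0 := by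
          have e2 : (4*(J:ℂ))*((J:ℂ)*z^2 + (e:ℂ)*z + (fq:ℂ))
              = ((2*(J:ℂ))*z)^2 + 2*(e:ℂ)*((2*(J:ℂ))*z) + 4*(J:ℂ)*(fq:ℂ) := by ring
          rw [e2, hw]
          linear_combination ((t:ℂ)^2)*hI - htC
        have hquad : (J:ℂ)*z^2 + (e:ℂ)*z + (fq:ℂ) = 0 :=
          (mul_eq_zero.mp h4).resolve_left (by
            intro hcon
            apply hJC
            have h' : (J:ℂ) = (4*(J:ℂ))/4 := by ring
            rw [h', hcon]; norm_num)
        have hzre : z.re < 0 := by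
          apply h
          rw [hfacC, hquad, mul_zero]
        have hre : z.re = X := by rw [hz]; simp
        rw [hre] at hzre
        nlinarith [mul_pos hJ (neg_pos.mpr hzre)]
    obtain ⟨he, hfq⟩ := hef
    have hpos : 0 < fq - e*r + J*r^2 := by
      nlinarith [mul_pos he (neg_pos.mpr hrneg),
        mul_pos hJ (mul_pos (neg_pos.mpr hrneg) (neg_pos.mpr hrneg))]
    have key2 : φ*lam*(2*(b+φ) - J*lam) = e*(fq - e*r + J*r^2) := by
      rw [he_def, hfq_def]
      linear_combination (-J)*hr
    nlinarith [mul_pos he hpos, mul_pos hφ hlam]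
  · intro h
    intro s hs
    by_contra hx
    push_neg at hx
    obtain ⟨x, y⟩ := s
    simp only [Complex.ext_iff] at hs
    simp [pow_succ, Complex.add_re, Complex.add_im, Complex.mul_re, Complex.mul_im,
      Complex.ofReal_re, Complex.ofReal_im] at hs
    obtain ⟨h1, h2⟩ := hs
    simp only [Complex.ofReal_re] at hx  -- hx : 0 ≤ x hopefully
    rcases eq_or_ne y 0 with hy | hy
    · subst hy
      have ha2 : 0 < b + φ := by nlinarith [mul_pos hJ hlam]
      nlinarith [mul_pos hφ (mul_pos hlam hlam), mul_nonneg (mul_nonneg ha2.le hx) hx,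
        mul_nonneg (mul_nonneg hJ.le hx) (mul_nonneg hx hx),
        mul_nonneg (mul_nonneg hφ.le hlam.le) hx]
    · have h2'' : y * (J * (3*x^2 - y^2) + 2*(b+φ)*x + 2*φ*lam) = 0 := by linear_combination h2
      have hy2 : J * y^2 = 3*J*x^2 + 2*(b+φ)*x + 2*φ*lam := by
        have := (mul_eq_zero.mp h2'').resolve_left hy
        linarith
      have key : 8*J^2*x^3 + 8*J*(b+φ)*x^2 + (4*J*φ*lam + 2*(b+φ)^2)*x
          + (2*φ*lam*(b+φ) - J*φ*lam^2) = 0 := by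
        linear_combination -(3*J*x + (b+φ))*hy2 - J*h1
      have hconst : 0 < 2*φ*lam*(b+φ) - J*φ*lam^2 := by nlinarith [mul_pos hφ hlam]
      have ha2 : 0 < b + φ := by nlinarith
      nlinarith [mul_nonneg (mul_nonneg (sq_nonneg J) hx) (sq_nonneg x),
        mul_nonneg (mul_nonneg (mul_nonneg hJ.le ha2.le) hx) hx,
        mul_nonneg (add_nonneg (by positivity : (0:ℝ) ≤ 4*J*φ*lam) (by positivity : (0:ℝ) ≤ 2*(b+φ)^2)) hx]
end

section
/- Fix m and let Φ, Λ, Ĵ, B̂ be m×m diagonal real matrices (the entries of Φ and Λ positive). Let z : ℝ → ℝ^m be twice continuously differentiable, x : ℝ → ℝ^m be differentiable, and let Ω : ℝ → ℝ^m be three times continuously differentiable with Ω(0) = 0 and Ω'(0) = 0, satisfying Φ Ω'(t) + 2ΦΛ Ω(t) + ΦΛ² ∫₀ᵗ Ω(τ)dτ = z(t) for all t ≥ 0. Define e := z − x, r := Ĵ Ω'' + B̂ Ω' + z, and u(t) := Φ (r − x)'(t) + 2ΦΛ (r − x)(t) + ΦΛ² ∫₀ᵗ (r − x)(τ)dτ.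 Then for all t ≥ 0, u(t) = Ĵ z''(t) + B̂ z'(t) + Φ e'(t) + 2ΦΛ e(t) + ΦΛ² ∫₀ᵗ e(τ)dτ. -/
open Matrix intervalIntegral

namespace Stmt3Aux

variable {m : ℕ}

noncomputable def L (A : Matrix (Fin m) (Fin m) ℝ) : (Fin m → ℝ) →L[ℝ] (Fin m → ℝ) :=
  LinearMap.toContinuousLinearMap A.mulVecLin

lemma L_apply (A : Matrix (Fin m) (Fin m) ℝ) (v : Fin m → ℝ) : L A v = A.mulVec v := rfl

lemma hasDerivAt_mulVec (A : Matrix (Fin m) (Fin m) ℝ) {f : ℝ → Fin m → ℝ} {f' : Fin m → ℝ}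
    {t : ℝ} (hf : HasDerivAt f f' t) :
    HasDerivAt (fun s => A.mulVec (f s)) (A.mulVec f') t := by
  have := (L A).hasFDerivAt.comp_hasDerivAt t hf
  simpa [L_apply, Function.comp_def] using this

lemma integral_mulVec (A : Matrix (Fin m) (Fin m) ℝ) {f : ℝ → Fin m → ℝ} {a b : ℝ}
    (hf : Continuous f) :
    (∫ τ in a..b, A.mulVec (f τ)) = A.mulVec (∫ τ in a..b, f τ) :=
  (L A).intervalIntegral_comp_comm (hf.intervalIntegrable a b)

lemma isDiag_mul {A B : Matrix (Fin m) (Fin m) ℝ} (hA : A.IsDiag) (hB : B.IsDiag) :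
    (A * B).IsDiag := by
  rw [← hA.diagonal_diag, ← hB.diagonal_diag, Matrix.diagonal_mul_diagonal]
  exact Matrix.isDiag_diagonal _

lemma mulVec_comm {A B : Matrix (Fin m) (Fin m) ℝ} (hA : A.IsDiag) (hB : B.IsDiag)
    (v : Fin m → ℝ) : A.mulVec (B.mulVec v) = B.mulVec (A.mulVec v) := by
  rw [Matrix.mulVec_mulVec, Matrix.mulVec_mulVec]
  rw [← hA.diagonal_diag, ← hB.diagonal_diag, Matrix.diagonal_mul_diagonal,
    Matrix.diagonal_mul_diagonal]
  funext i
  simp only [Matrix.mulVec_diagonal]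
  ring

end Stmt3Aux

/-- Lemma 1 (time domain): with the control channel
`C_u f = Φ f' + 2ΦΛ f + ΦΛ² ∫₀ᵗ f`, the internal signal `Ω = C_u⁻¹ z`
(zero initial conditions), the ideal reference `r = Ĵ Ω̈ + B̂ Ω̇ + z`, and the
control input `u = C_u (r − x)`, one has `u = Ĵ z̈ + B̂ ż + C_u e` with
`e = z − x`. -/
theorem stmt_3 (m : ℕ) (Φ Λ Jh Bh : Matrix (Fin m) (Fin m) ℝ)
    (hΦd : Φ.IsDiag) (hΛd : Λ.IsDiag) (hJhd : Jh.IsDiag) (hBhd : Bh.IsDiag)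
    (hΦpos : ∀ i, 0 < Φ i i) (hΛpos : ∀ i, 0 < Λ i i)
    (z x Ω : ℝ → Fin m → ℝ)
    (hz : ContDiff ℝ 2 z) (hx : Differentiable ℝ x) (hΩ : ContDiff ℝ 3 Ω)
    (hΩ0 : Ω 0 = 0) (hΩ'0 : deriv Ω 0 = 0)
    (hode : ∀ t ≥ (0 : ℝ),
      Φ.mulVec (deriv Ω t) + (2 : ℝ) • (Φ * Λ).mulVec (Ω t)
        + (Φ * Λ ^ 2).mulVec (∫ τ in (0 : ℝ)..t, Ω τ) = z t)
    (e r u : ℝ → Fin m → ℝ)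
    (he : e = z - x)
    (hr : r = fun t => Jh.mulVec (deriv (deriv Ω) t) + Bh.mulVec (deriv Ω t) + z t)
    (hu : u = fun t => Φ.mulVec (deriv (r - x) t) + (2 : ℝ) • (Φ * Λ).mulVec ((r - x) t)
        + (Φ * Λ ^ 2).mulVec (∫ τ in (0 : ℝ)..t, (r - x) τ)) :
    ∀ t ≥ (0 : ℝ),
      u t = Jh.mulVec (deriv (deriv z) t) + Bh.mulVec (deriv z t)
        + Φ.mulVec (deriv e t) + (2 : ℝ) • (Φ * Λ).mulVec (e t)
        + (Φ * Λ ^ 2).mulVec (∫ τ in (0 : ℝ)..t, e τ) := by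
  -- abbreviations
  set Ω1 := deriv Ω with hΩ1def
  set Ω2 := deriv Ω1 with hΩ2def
  set Ω3 := deriv Ω2 with hΩ3def
  -- smoothness bookkeeping for Ω
  have hΩ3' : ContDiff ℝ ((2 : ℕ) + 1) Ω := by exact_mod_cast hΩ
  have hΩdiff : Differentiable ℝ Ω := (contDiff_succ_iff_deriv.mp hΩ3').1
  have hΩ1cd : ContDiff ℝ 2 Ω1 := (contDiff_succ_iff_deriv.mp hΩ3').2.2
  have hΩ1cd' : ContDiff ℝ ((1 : ℕ) + 1) Ω1 := by exact_mod_cast hΩ1cd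
  have hΩ1diff : Differentiable ℝ Ω1 := (contDiff_succ_iff_deriv.mp hΩ1cd').1
  have hΩ2cd : ContDiff ℝ 1 Ω2 := (contDiff_succ_iff_deriv.mp hΩ1cd').2.2
  have hΩ2diff : Differentiable ℝ Ω2 := hΩ2cd.differentiable one_ne_zero
  have hΩcont : Continuous Ω := hΩdiff.continuous
  have hΩ1cont : Continuous Ω1 := hΩ1diff.continuous
  have hΩ2cont : Continuous Ω2 := hΩ2diff.continuous
  have hΩ3cont : Continuous Ω3 := (contDiff_one_iff_deriv.mp hΩ2cd).2
  -- smoothness bookkeeping for z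
  have hz2' : ContDiff ℝ ((1 : ℕ) + 1) z := by exact_mod_cast hz
  have hzdiff : Differentiable ℝ z := (contDiff_succ_iff_deriv.mp hz2').1
  have hz1cd : ContDiff ℝ 1 (deriv z) := (contDiff_succ_iff_deriv.mp hz2').2.2
  have hz1cont : Continuous (deriv z) := hz1cd.continuous
  have hz1diff : Differentiable ℝ (deriv z) := hz1cd.differentiable one_ne_zero
  have hz2cont : Continuous (deriv (deriv z)) := (contDiff_one_iff_deriv.mp hz1cd).2
  -- e
  have hediff : Differentiable ℝ e := he ▸ (hzdiff.sub hx)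
  have hecont : Continuous e := hediff.continuous
  -- the first and second derivatives of z on [0, ∞)
  set D1 : ℝ → Fin m → ℝ := fun s =>
    Φ.mulVec (Ω2 s) + (2 : ℝ) • (Φ * Λ).mulVec (Ω1 s) + (Φ * Λ ^ 2).mulVec (Ω s) with hD1def
  set D2 : ℝ → Fin m → ℝ := fun s =>
    Φ.mulVec (Ω3 s) + (2 : ℝ) • (Φ * Λ).mulVec (Ω2 s) + (Φ * Λ ^ 2).mulVec (Ω1 s) with hD2def
  have hD1cont : Continuous D1 :=
    ((continuous_const.matrix_mulVec hΩ2cont).add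
      ((continuous_const.matrix_mulVec hΩ1cont).const_smul (2 : ℝ))).add
      (continuous_const.matrix_mulVec hΩcont)
  have hD2cont : Continuous D2 :=
    ((continuous_const.matrix_mulVec hΩ3cont).add
      ((continuous_const.matrix_mulVec hΩ2cont).const_smul (2 : ℝ))).add
      (continuous_const.matrix_mulVec hΩ1cont)
  -- F = C_u Ω, with F = z on [0,∞), and F' = D1 everywhere
  set F : ℝ → Fin m → ℝ := fun s =>
    Φ.mulVec (Ω1 s) + (2 : ℝ) • (Φ * Λ).mulVec (Ω s)
      + (Φ * Λ ^ 2).mulVec (∫ τ in (0 : ℝ)..s, Ω τ) with hFdef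
  have hF : ∀ s : ℝ, HasDerivAt F (D1 s) s := by
    intro s
    have h1 : HasDerivAt (fun τ => Φ.mulVec (Ω1 τ)) (Φ.mulVec (Ω2 s)) s :=
      Stmt3Aux.hasDerivAt_mulVec Φ (hΩ1diff s).hasDerivAt
    have h2 : HasDerivAt (fun τ => (2 : ℝ) • (Φ * Λ).mulVec (Ω τ))
        ((2 : ℝ) • (Φ * Λ).mulVec (Ω1 s)) s :=
      (Stmt3Aux.hasDerivAt_mulVec (Φ * Λ) (hΩdiff s).hasDerivAt).const_smul (2 : ℝ)
    have h3 : HasDerivAt (fun τ => ∫ σ in (0 : ℝ)..τ, Ω σ) (Ω s) s :=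
      intervalIntegral.integral_hasDerivAt_right (hΩcont.intervalIntegrable _ _)
        hΩcont.aestronglyMeasurable.stronglyMeasurableAtFilter hΩcont.continuousAt
    exact (h1.add h2).add (Stmt3Aux.hasDerivAt_mulVec (Φ * Λ ^ 2) h3)
  have hzF : Set.EqOn z F (Set.Ici 0) := fun s hs => (hode s hs).symm
  -- deriv z = D1 on [0, ∞)
  have hz1 : Set.EqOn (deriv z) D1 (Set.Ici 0) := by
    have hIoi : Set.EqOn (deriv z) D1 (Set.Ioi 0) := by
      intro s hs
      have hmem : Set.Ici (0 : ℝ) ∈ nhds s := Filter.mem_of_superset (Ioi_mem_nhds hs) Set.Ioi_subset_Ici_self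
      have hev : z =ᶠ[nhds s] F := Filter.eventuallyEq_of_mem hmem hzF
      rw [hev.deriv_eq, (hF s).deriv]
    have := (hIoi.closure hz1cont hD1cont)
    rwa [closure_Ioi] at this
  -- deriv (deriv z) = D2 on [0, ∞)
  have hD1' : ∀ s : ℝ, HasDerivAt D1 (D2 s) s := by
    intro s
    exact ((Stmt3Aux.hasDerivAt_mulVec Φ (hΩ2diff s).hasDerivAt).add
      ((Stmt3Aux.hasDerivAt_mulVec (Φ * Λ) (hΩ1diff s).hasDerivAt).const_smul (2 : ℝ))).add
      (Stmt3Aux.hasDerivAt_mulVec (Φ * Λ ^ 2) (hΩdiff s).hasDerivAt)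
  have hz2 : Set.EqOn (deriv (deriv z)) D2 (Set.Ici 0) := by
    have hIoi : Set.EqOn (deriv (deriv z)) D2 (Set.Ioi 0) := by
      intro s hs
      have hmem : Set.Ici (0 : ℝ) ∈ nhds s := Filter.mem_of_superset (Ioi_mem_nhds hs) Set.Ioi_subset_Ici_self
      have hev : deriv z =ᶠ[nhds s] D1 := Filter.eventuallyEq_of_mem hmem hz1
      rw [hev.deriv_eq, (hD1' s).deriv]
    have := (hIoi.closure hz2cont hD2cont)
    rwa [closure_Ioi] at this
  -- now the main computation
  intro t ht
  have hrx : r - x = fun s => Jh.mulVec (Ω2 s) + Bh.mulVec (Ω1 s) + e s := by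
    funext s
    simp only [Pi.sub_apply, hr, he]
    abel
  have hderiv_rx : deriv (r - x) t = Jh.mulVec (Ω3 t) + Bh.mulVec (Ω2 t) + deriv e t := by
    rw [hrx]
    exact (((Stmt3Aux.hasDerivAt_mulVec Jh (hΩ2diff t).hasDerivAt).add
      (Stmt3Aux.hasDerivAt_mulVec Bh (hΩ1diff t).hasDerivAt)).add
      (hediff t).hasDerivAt).deriv
  have hint1 : (∫ τ in (0 : ℝ)..t, Ω2 τ) = Ω1 t := by
    rw [hΩ2def]
    rw [intervalIntegral.integral_deriv_eq_sub (fun τ _ => (hΩ1diff τ))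
      (hΩ2cont.intervalIntegrable _ _)]
    rw [hΩ'0, sub_zero]
  have hint2 : (∫ τ in (0 : ℝ)..t, Ω1 τ) = Ω t := by
    rw [hΩ1def]
    rw [intervalIntegral.integral_deriv_eq_sub (fun τ _ => (hΩdiff τ))
      (hΩ1cont.intervalIntegrable _ _)]
    rw [hΩ0, sub_zero]
  have hint_rx : (∫ τ in (0 : ℝ)..t, (r - x) τ)
      = Jh.mulVec (Ω1 t) + Bh.mulVec (Ω t) + ∫ τ in (0 : ℝ)..t, e τ := by
    rw [hrx]
    beta_reduce
    rw [intervalIntegral.integral_add (f := fun s => Jh.mulVec (Ω2 s) + Bh.mulVec (Ω1 s)) (g := e)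
      (((continuous_const.matrix_mulVec hΩ2cont).add
        (continuous_const.matrix_mulVec hΩ1cont)).intervalIntegrable _ _)
      (hecont.intervalIntegrable _ _),
      intervalIntegral.integral_add
      ((continuous_const.matrix_mulVec hΩ2cont).intervalIntegrable _ _)
      ((continuous_const.matrix_mulVec hΩ1cont).intervalIntegrable _ _),
      Stmt3Aux.integral_mulVec Jh hΩ2cont, Stmt3Aux.integral_mulVec Bh hΩ1cont,
      hint1, hint2]
  -- commutation facts
  have hΦΛd : (Φ * Λ).IsDiag := Stmt3Aux.isDiag_mul hΦd hΛd
  have hΦΛ2d : (Φ * Λ ^ 2).IsDiag := by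
    rw [sq, ← mul_assoc]
    exact Stmt3Aux.isDiag_mul (Stmt3Aux.isDiag_mul hΦd hΛd) hΛd
  have c1 : ∀ v, Φ.mulVec (Jh.mulVec v) = Jh.mulVec (Φ.mulVec v) :=
    Stmt3Aux.mulVec_comm hΦd hJhd
  have c2 : ∀ v, (Φ * Λ).mulVec (Jh.mulVec v) = Jh.mulVec ((Φ * Λ).mulVec v) :=
    Stmt3Aux.mulVec_comm hΦΛd hJhd
  have c3 : ∀ v, (Φ * Λ ^ 2).mulVec (Jh.mulVec v) = Jh.mulVec ((Φ * Λ ^ 2).mulVec v) :=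
    Stmt3Aux.mulVec_comm hΦΛ2d hJhd
  have c4 : ∀ v, Φ.mulVec (Bh.mulVec v) = Bh.mulVec (Φ.mulVec v) :=
    Stmt3Aux.mulVec_comm hΦd hBhd
  have c5 : ∀ v, (Φ * Λ).mulVec (Bh.mulVec v) = Bh.mulVec ((Φ * Λ).mulVec v) :=
    Stmt3Aux.mulVec_comm hΦΛd hBhd
  have c6 : ∀ v, (Φ * Λ ^ 2).mulVec (Bh.mulVec v) = Bh.mulVec ((Φ * Λ ^ 2).mulVec v) :=
    Stmt3Aux.mulVec_comm hΦΛ2d hBhd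
  -- put everything together
  have hrxt : (r - x) t = Jh.mulVec (Ω2 t) + Bh.mulVec (Ω1 t) + e t := by rw [hrx]
  rw [hu]
  simp only [hderiv_rx, hint_rx, hrxt]
  rw [hz1 ht, hz2 ht, hD1def, hD2def]
  simp only [Matrix.mulVec_add, Matrix.mulVec_smul, smul_add, c1, c2, c3, c4, c5, c6]
  abel
end

section
/- Under the hypotheses of the preceding Lyapunov computation (diagonal positive J, Φ, Γ; symmetric positive definite P, Q with (−J⁻¹Φ)ᵀP + P(−J⁻¹Φ) = −Q; continuous η; differentiable θ, Ξ̃ solving θ' = −J⁻¹Φθ − J⁻¹Ξ̃η and Ξ̃' = Γ(Pθ)ηᵀ; V(t) = θᵀPθ + tr(Ξ̃ᵀJ⁻¹Γ⁻¹Ξ̃)), for all t ≥ 0 and T ≥ 0: V(t) ≤ V(0), ‖θ(t)‖² ≤ V(0) / λ_min(P), and ∫₀ᵀ ‖θ(t)‖² dt ≤ V(0) / λ_min(Q), where λ_min denotes the smallest eigenvalue of a symmetric positive definite matrix. -/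
open Matrix

lemma rayleigh_lower {m : ℕ} {A : Matrix (Fin m) (Fin m) ℝ} (hA : A.IsHermitian)
    (x : Fin m → ℝ) :
    (⨅ i, hA.eigenvalues i) * ∑ i, x i ^ 2 ≤ x ⬝ᵥ A.mulVec x := by
  classical
  set U : Matrix (Fin m) (Fin m) ℝ := (hA.eigenvectorUnitary : Matrix (Fin m) (Fin m) ℝ) with hU
  have hstar : star U = Uᵀ := by
    ext i j; simp [Matrix.conjTranspose_apply]
  set y : Fin m → ℝ := Uᵀ *ᵥ x with hy
  have hUU : U * Uᵀ = 1 := by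
    rw [← hstar]
    exact (Matrix.mem_unitaryGroup_iff).mp hA.eigenvectorUnitary.2
  have hquad : x ⬝ᵥ A.mulVec x = ∑ i, hA.eigenvalues i * y i ^ 2 := by
    conv_lhs => rw [hA.spectral_theorem, Unitary.conjStarAlgAut_apply]
    rw [hstar, ← hU]
    simp only [← Matrix.mulVec_mulVec]
    rw [Matrix.dotProduct_mulVec, ← Matrix.mulVec_transpose, ← hy]
    simp [dotProduct, Matrix.mulVec_diagonal]
    refine Finset.sum_congr rfl fun i _ => by ring
  have hnorm : ∑ i, y i ^ 2 = ∑ i, x i ^ 2 := by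
    have h1 : y ⬝ᵥ y = x ⬝ᵥ x := by
      have h0 : U *ᵥ (Uᵀ *ᵥ x) = x := by
        rw [Matrix.mulVec_mulVec, hUU, Matrix.one_mulVec]
      rw [hy, Matrix.dotProduct_mulVec, Matrix.vecMul_transpose, h0]
    simpa [dotProduct, pow_two] using h1
  rw [hquad, ← hnorm, Finset.mul_sum]
  refine Finset.sum_le_sum fun i _ => ?_
  exact mul_le_mul_of_nonneg_right
    (ciInf_le (Set.Finite.bddBelow (Set.finite_range _)) i) (sq_nonneg _)

/-- Smallest eigenvalue of a Hermitian real matrix. -/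
noncomputable def lambdaMin {m : ℕ} {A : Matrix (Fin m) (Fin m) ℝ}
    (hA : A.IsHermitian) : ℝ := ⨅ i, hA.eigenvalues i

lemma lambdaMin_pos {m : ℕ} [NeZero m] {A : Matrix (Fin m) (Fin m) ℝ}
    (hA : A.PosDef) : 0 < lambdaMin hA.1 := by
  obtain ⟨i0, -, hi0⟩ := Finset.exists_min_image Finset.univ hA.1.eigenvalues
    Finset.univ_nonempty
  have h1 : hA.1.eigenvalues i0 ≤ lambdaMin hA.1 :=
    le_ciInf fun i => hi0 i (Finset.mem_univ i)
  exact lt_of_lt_of_le (hA.eigenvalues_pos i0) h1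

/-- Boundedness and L² conclusions in the proof of Theorem 1: since
`V̇ = −θᵀQθ ≤ 0`, `V` is nonincreasing, `‖θ(t)‖² ≤ V(0)/λ_min(P)` and
`∫₀ᵀ ‖θ‖² ≤ V(0)/λ_min(Q)`. -/
theorem stmt_6 (m : ℕ) (J Φ Γ : Matrix (Fin m) (Fin m) ℝ)
    (hJd : J.IsDiag) (hΦd : Φ.IsDiag) (hΓd : Γ.IsDiag)
    (hJpos : ∀ i, 0 < J i i) (hΦpos : ∀ i, 0 < Φ i i) (hΓpos : ∀ i, 0 < Γ i i)
    (P Q : Matrix (Fin m) (Fin m) ℝ) (hP : P.PosDef) (hQ : Q.PosDef)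
    (hLyap : (-(J⁻¹ * Φ))ᵀ * P + P * (-(J⁻¹ * Φ)) = -Q)
    (η : ℝ → Fin (2 * m) → ℝ) (hη : Continuous η)
    (θ : ℝ → Fin m → ℝ) (Ξ : ℝ → Matrix (Fin m) (Fin (2 * m)) ℝ)
    (hθ : ∀ t, HasDerivAt θ
      (-((J⁻¹ * Φ).mulVec (θ t)) - J⁻¹.mulVec ((Ξ t).mulVec (η t))) t)
    (hΞ : ∀ t i j, HasDerivAt (fun s => Ξ s i j)
      ((Matrix.vecMulVec (Γ.mulVec (P.mulVec (θ t))) (η t)) i j) t)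
    (V : ℝ → ℝ)
    (hV : V = fun t => θ t ⬝ᵥ P.mulVec (θ t)
        + ((Ξ t)ᵀ * (J⁻¹ * Γ⁻¹) * Ξ t).trace) :
    (∀ t ≥ (0 : ℝ), V t ≤ V 0 ∧ (∑ i, θ t i ^ 2) ≤ V 0 / lambdaMin hP.1)
      ∧ ∀ T ≥ (0 : ℝ), (∫ t in (0 : ℝ)..T, ∑ i, θ t i ^ 2) ≤ V 0 / lambdaMin hQ.1 := by
  classical
  -- trivial case m = 0
  rcases Nat.eq_zero_or_pos m with rfl | hm
  · have hV0 : V = fun _ => 0 := by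
      rw [hV]; funext t
      simp [Matrix.trace, dotProduct]
    simp [hV0]
  haveI : NeZero m := ⟨hm.ne'⟩
  set a : Fin m → ℝ := fun i => J i i with ha
  set b : Fin m → ℝ := fun i => Φ i i with hb
  set c : Fin m → ℝ := fun i => Γ i i with hc
  have ha0 : ∀ i, a i ≠ 0 := fun i => (hJpos i).ne'
  have hc0 : ∀ i, c i ≠ 0 := fun i => (hΓpos i).ne'
  have hJeq : J = diagonal a := (hJd.diagonal_diag).symm
  have hΦeq : Φ = diagonal b := (hΦd.diagonal_diag).symm
  have hΓeq : Γ = diagonal c := (hΓd.diagonal_diag).symm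
  have hJinv : J⁻¹ = diagonal (fun i => (a i)⁻¹) := by
    refine Matrix.inv_eq_right_inv ?_
    rw [hJeq, Matrix.diagonal_mul_diagonal]
    rw [show (fun i => a i * (a i)⁻¹) = fun _ => (1:ℝ) from
      funext fun i => mul_inv_cancel₀ (ha0 i)]
    exact Matrix.diagonal_one
  have hΓinv : Γ⁻¹ = diagonal (fun i => (c i)⁻¹) := by
    refine Matrix.inv_eq_right_inv ?_
    rw [hΓeq, Matrix.diagonal_mul_diagonal]
    rw [show (fun i => c i * (c i)⁻¹) = fun _ => (1:ℝ) from
      funext fun i => mul_inv_cancel₀ (hc0 i)]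
    exact Matrix.diagonal_one
  set e : Fin m → ℝ := fun i => (a i)⁻¹ * b i with he
  set w : Fin m → ℝ := fun i => (a i)⁻¹ * (c i)⁻¹ with hw
  have hAeq : J⁻¹ * Φ = diagonal e := by
    rw [hJinv, hΦeq, Matrix.diagonal_mul_diagonal]
  have hMeq : J⁻¹ * Γ⁻¹ = diagonal w := by
    rw [hJinv, hΓinv, Matrix.diagonal_mul_diagonal]
  have hPsym : ∀ i j, P i j = P j i := by
    intro i j
    conv_lhs => rw [← hP.1]
    simp [Matrix.conjTranspose_apply]
  have hQij : ∀ i j, Q i j = e i * P i j + P i j * e j := by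
    intro i j
    have hQeq : Q = diagonal e * P + P * diagonal e := by
      have h := congrArg Neg.neg hLyap
      rw [neg_neg, hAeq] at h
      rw [← h]
      simp only [Matrix.transpose_neg, Matrix.diagonal_transpose, Matrix.neg_mul,
        Matrix.mul_neg, neg_add, neg_neg]
    rw [hQeq]
    simp [Matrix.add_apply, Matrix.diagonal_mul, Matrix.mul_diagonal]
  -- derivatives of components
  have hθi : ∀ t i, HasDerivAt (fun s => θ s i)
      (-(e i * θ t i) - (a i)⁻¹ * ((Ξ t).mulVec (η t) i)) t := by
    intro t i
    have h1 := (hasDerivAt_pi.mp (hθ t)) i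
    have h2 : (-((J⁻¹ * Φ).mulVec (θ t)) - J⁻¹.mulVec ((Ξ t).mulVec (η t))) i
        = -(e i * θ t i) - (a i)⁻¹ * ((Ξ t).mulVec (η t) i) := by
      rw [hAeq, hJinv]
      simp only [Pi.sub_apply, Pi.neg_apply, Matrix.mulVec_diagonal]
    rwa [h2] at h1
  have hΞi : ∀ t i j, HasDerivAt (fun s => Ξ s i j)
      (c i * (P.mulVec (θ t) i) * η t j) t := by
    intro t i j
    have h1 := hΞ t i j
    have h2 : (Matrix.vecMulVec (Γ.mulVec (P.mulVec (θ t))) (η t)) i j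
        = c i * (P.mulVec (θ t) i) * η t j := by
      rw [Matrix.vecMulVec_apply, hΓeq]
      simp [Matrix.mulVec_diagonal]
    rwa [h2] at h1
  -- sum formula for V
  have hVsum : V = fun t => (∑ i, ∑ j, θ t i * P i j * θ t j)
      + ∑ i, ∑ j, w i * Ξ t i j ^ 2 := by
    rw [hV]; funext t; congr 1
    · simp only [dotProduct, Matrix.mulVec, Finset.mul_sum]
      exact Finset.sum_congr rfl fun i _ => Finset.sum_congr rfl fun j _ => by
        ring
    · rw [hMeq]
      rw [Matrix.trace]
      simp only [Matrix.diag]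
      rw [Finset.sum_comm]
      refine Finset.sum_congr rfl fun j _ => ?_
      rw [Matrix.mul_apply]
      refine Finset.sum_congr rfl fun k _ => ?_
      rw [Matrix.mul_diagonal, Matrix.transpose_apply]
      ring
  -- the derivative of V
  have hdot : ∀ (u : ℝ) (R : Matrix (Fin m) (Fin m) ℝ),
      θ u ⬝ᵥ R.mulVec (θ u) = ∑ i, ∑ j, θ u i * (R i j * θ u j) := by
    intro u R
    simp [dotProduct, Matrix.mulVec, Finset.mul_sum]
  have hVderiv : ∀ t, HasDerivAt V (-(θ t ⬝ᵥ Q.mulVec (θ t))) t := by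
    intro t
    set p : Fin m → ℝ := P.mulVec (θ t) with hp
    set s : Fin m → ℝ := (Ξ t).mulVec (η t) with hs
    set θ' : Fin m → ℝ := fun i => -(e i * θ t i) - (a i)⁻¹ * s i with hθ'
    have hpdef : ∀ i, p i = ∑ j, P i j * θ t j := by
      intro i; simp [hp, Matrix.mulVec, dotProduct]
    have hsdef : ∀ i, s i = ∑ j, Ξ t i j * η t j := by
      intro i; simp [hs, Matrix.mulVec, dotProduct]
    have hd1 : HasDerivAt (fun u => ∑ i, ∑ j, θ u i * P i j * θ u j)
        (∑ i, ∑ j, (θ' i * P i j * θ t j + (θ t i * P i j) * θ' j)) t := by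
      refine HasDerivAt.fun_sum fun i _ => HasDerivAt.fun_sum fun j _ => ?_
      exact ((hθi t i).mul_const (P i j)).mul (hθi t j)
    have hd2 : HasDerivAt (fun u => ∑ i, ∑ j, w i * Ξ u i j ^ 2)
        (∑ i, ∑ j, w i * (2 * Ξ t i j * (c i * p i * η t j))) t := by
      refine HasDerivAt.fun_sum fun i _ => HasDerivAt.fun_sum fun j _ => ?_
      have h1 := ((hΞi t i j).pow 2).const_mul (w i)
      simpa using h1
    have hd := hd1.fun_add hd2
    rw [hVsum]
    refine hd.congr_deriv ?_
    -- algebraic identity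
    have hS2 : ∑ i, ∑ j, w i * (2 * Ξ t i j * (c i * p i * η t j))
        = ∑ i, 2 * ((a i)⁻¹ * p i * s i) := by
      refine Finset.sum_congr rfl fun i _ => ?_
      have h1 : ∀ j, w i * (2 * Ξ t i j * (c i * p i * η t j))
          = 2 * ((a i)⁻¹ * p i) * (Ξ t i j * η t j) := by
        intro j
        have hcc : (c i)⁻¹ * c i = 1 := inv_mul_cancel₀ (hc0 i)
        simp only [hw]
        rw [show (a i)⁻¹ * (c i)⁻¹ * (2 * Ξ t i j * (c i * p i * η t j))
            = ((c i)⁻¹ * c i) * (2 * ((a i)⁻¹ * p i) * (Ξ t i j * η t j)) from by ring,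
          hcc, one_mul]
      rw [Finset.sum_congr rfl fun j _ => h1 j, ← Finset.mul_sum, ← hsdef i]
      ring
    have hT2 : ∀ i, ∑ j, (a i)⁻¹ * s i * (P i j * θ t j) = (a i)⁻¹ * s i * p i := by
      intro i; rw [← Finset.mul_sum, ← hpdef i]
    have hT3 : ∑ i, ∑ j, (θ t i * P i j) * ((a j)⁻¹ * s j)
        = ∑ j, (a j)⁻¹ * s j * p j := by
      rw [Finset.sum_comm]
      refine Finset.sum_congr rfl fun j _ => ?_
      have h1 : ∀ i, (θ t i * P i j) * ((a j)⁻¹ * s j)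
          = ((a j)⁻¹ * s j) * (P j i * θ t i) := by
        intro i; rw [hPsym i j]; ring
      rw [Finset.sum_congr rfl fun i _ => h1 i, ← Finset.mul_sum, ← hpdef j]
    have hexp : ∀ i j, θ' i * P i j * θ t j + (θ t i * P i j) * θ' j
        = -(θ t i * (Q i j * θ t j))
          - ((a i)⁻¹ * s i * (P i j * θ t j)) - ((θ t i * P i j) * ((a j)⁻¹ * s j)) := by
      intro i j
      rw [hQij i j]
      simp only [hθ']
      ring
    have hS1 : ∑ i, ∑ j, (θ' i * P i j * θ t j + (θ t i * P i j) * θ' j)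
        = -(θ t ⬝ᵥ Q.mulVec (θ t)) - ∑ i, (a i)⁻¹ * s i * p i - ∑ i, (a i)⁻¹ * s i * p i := by
      rw [Finset.sum_congr rfl fun i _ => Finset.sum_congr rfl fun j _ => hexp i j]
      simp only [Finset.sum_sub_distrib]
      rw [hT3, Finset.sum_congr rfl fun i (_ : i ∈ Finset.univ) => hT2 i]
      have hneg : ∑ x : Fin m, ∑ y : Fin m, -(θ t x * (Q x y * θ t y))
          = -(θ t ⬝ᵥ Q.mulVec (θ t)) := by
        rw [hdot t Q]
        simp only [Finset.sum_neg_distrib]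
      rw [hneg]
    rw [hS1, hS2]
    have : ∑ i, 2 * ((a i)⁻¹ * p i * s i) = ∑ i, (a i)⁻¹ * s i * p i + ∑ i, (a i)⁻¹ * s i * p i := by
      rw [← Finset.sum_add_distrib]
      exact Finset.sum_congr rfl fun i _ => by ring
    rw [this]
    ring
  -- continuity
  have hθct : ∀ i, Continuous fun u => θ u i :=
    fun i => continuous_iff_continuousAt.mpr fun t => (hθi t i).continuousAt
  have hgeq : (fun u => θ u ⬝ᵥ Q.mulVec (θ u))
      = fun u => ∑ i, ∑ j, θ u i * (Q i j * θ u j) := funext fun u => hdot u Q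
  have hg : Continuous fun u => θ u ⬝ᵥ Q.mulVec (θ u) := by
    rw [hgeq]
    exact continuous_finset_sum _ fun i _ => continuous_finset_sum _ fun j _ =>
      (hθct i).mul (continuous_const.mul (hθct j))
  have hh : Continuous fun u => ∑ i, θ u i ^ 2 :=
    continuous_finset_sum _ fun i _ => (hθct i).pow 2
  have hgnn : ∀ u, 0 ≤ θ u ⬝ᵥ Q.mulVec (θ u) := fun u => by
    simpa using hQ.posSemidef.re_dotProduct_nonneg (θ u)
  have hpnn : ∀ u, 0 ≤ θ u ⬝ᵥ P.mulVec (θ u) := fun u => by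
    simpa using hP.posSemidef.re_dotProduct_nonneg (θ u)
  have hmono : Antitone V :=
    antitone_of_hasDerivAt_nonpos hVderiv fun u => neg_nonpos.mpr (hgnn u)
  have hPterm : ∀ u, θ u ⬝ᵥ P.mulVec (θ u) ≤ V u := by
    intro u
    have h1 : θ u ⬝ᵥ P.mulVec (θ u) = ∑ i, ∑ j, θ u i * P i j * θ u j := by
      rw [hdot u P]
      exact Finset.sum_congr rfl fun i _ => Finset.sum_congr rfl fun j _ => by ring
    rw [hVsum, h1]
    refine le_add_of_nonneg_right ?_
    refine Finset.sum_nonneg fun i _ => Finset.sum_nonneg fun j _ => mul_nonneg ?_ (sq_nonneg _)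
    have := (hJpos i).le
    have := (hΓpos i).le
    positivity
  have hVnn : ∀ u, 0 ≤ V u := fun u => le_trans (hpnn u) (hPterm u)
  constructor
  · intro t ht
    have h1 : V t ≤ V 0 := hmono ht
    refine ⟨h1, ?_⟩
    have h2 : lambdaMin hP.1 * ∑ i, θ t i ^ 2 ≤ V 0 :=
      le_trans (rayleigh_lower hP.1 (θ t)) (le_trans (hPterm t) h1)
    rw [le_div_iff₀ (lambdaMin_pos hP)]
    linarith
  · intro T hT
    have hib : IntervalIntegrable (fun u => θ u ⬝ᵥ Q.mulVec (θ u)) MeasureTheory.volume 0 T :=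
      hg.intervalIntegrable 0 T
    have hmon : lambdaMin hQ.1 * ∫ t in (0:ℝ)..T, ∑ i, θ t i ^ 2
        ≤ ∫ t in (0:ℝ)..T, θ t ⬝ᵥ Q.mulVec (θ t) := by
      rw [← intervalIntegral.integral_const_mul]
      refine intervalIntegral.integral_mono_on hT
        ((continuous_const.mul hh).intervalIntegrable 0 T) hib ?_
      intro x _
      exact rayleigh_lower hQ.1 (θ x)
    have hftc : ∫ t in (0:ℝ)..T, -(θ t ⬝ᵥ Q.mulVec (θ t)) = V T - V 0 :=
      intervalIntegral.integral_eq_sub_of_hasDerivAt (fun x _ => hVderiv x)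
        (hg.neg.intervalIntegrable 0 T)
    rw [intervalIntegral.integral_neg] at hftc
    have hQint : ∫ t in (0:ℝ)..T, θ t ⬝ᵥ Q.mulVec (θ t) ≤ V 0 := by
      have := hVnn T
      linarith
    rw [le_div_iff₀ (lambdaMin_pos hQ)]
    calc (∫ t in (0:ℝ)..T, ∑ i, θ t i ^ 2) * lambdaMin hQ.1
        = lambdaMin hQ.1 * ∫ t in (0:ℝ)..T, ∑ i, θ t i ^ 2 := mul_comm _ _
      _ ≤ ∫ t in (0:ℝ)..T, θ t ⬝ᵥ Q.mulVec (θ t) := hmon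
      _ ≤ V 0 := hQint
end

section
/- Fix m and let J, Φ, Γ be m×m diagonal real matrices with positive diagonal entries, and let P, Q be m×m symmetric positive definite real matrices with (−J⁻¹Φ)ᵀP + P(−J⁻¹Φ) = −Q. Let η : [0,∞) → ℝ^{2m} be continuous and bounded, and let θ : [0,∞) → ℝ^m and Ξ̃ : [0,∞) → (m × 2m real matrices) be differentiable solutions of θ' = −J⁻¹Φθ − J⁻¹Ξ̃η and Ξ̃' = Γ(Pθ)ηᵀ. Then θ(t) → 0 as t → ∞. -/
open Matrix Filter

lemma aux_abs_dot_le {n p : ℕ} (M : Matrix (Fin n) (Fin p) ℝ) (v : Fin n → ℝ) (w : Fin p → ℝ) :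
    |v ⬝ᵥ M.mulVec w| ≤ (∑ i, ∑ k, |M i k|) * (‖v‖ * ‖w‖) := by
  have h1 : v ⬝ᵥ M.mulVec w = ∑ i, ∑ k, v i * (M i k * w k) := by
    simp [dotProduct, Matrix.mulVec, Finset.mul_sum]
  rw [h1]
  calc |∑ i, ∑ k, v i * (M i k * w k)| ≤ ∑ i, |∑ k, v i * (M i k * w k)| :=
        Finset.abs_sum_le_sum_abs _ _
    _ ≤ ∑ i, ∑ k, |v i * (M i k * w k)| :=
        Finset.sum_le_sum fun i _ => Finset.abs_sum_le_sum_abs _ _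
    _ ≤ ∑ i, ∑ k, |M i k| * (‖v‖ * ‖w‖) := by
        refine Finset.sum_le_sum fun i _ => Finset.sum_le_sum fun k _ => ?_
        rw [abs_mul, abs_mul]
        have hv : |v i| ≤ ‖v‖ := by simpa using norm_le_pi_norm v i
        have hw : |w k| ≤ ‖w‖ := by simpa using norm_le_pi_norm w k
        calc |v i| * (|M i k| * |w k|) = |M i k| * (|v i| * |w k|) := by ring
          _ ≤ |M i k| * (‖v‖ * ‖w‖) :=
            mul_le_mul_of_nonneg_left
              (mul_le_mul hv hw (abs_nonneg _) (norm_nonneg _)) (abs_nonneg _)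
    _ = (∑ i, ∑ k, |M i k|) * (‖v‖ * ‖w‖) := by simp [Finset.sum_mul]

lemma aux_norm_mulVec_le {n p : ℕ} (M : Matrix (Fin n) (Fin p) ℝ) (w : Fin p → ℝ) :
    ‖M.mulVec w‖ ≤ (∑ i, ∑ k, |M i k|) * ‖w‖ := by
  have hnn : 0 ≤ (∑ i, ∑ k, |M i k|) * ‖w‖ :=
    mul_nonneg (Finset.sum_nonneg fun i _ => Finset.sum_nonneg fun k _ => abs_nonneg _)
      (norm_nonneg _)
  rw [pi_norm_le_iff_of_nonneg hnn]
  intro i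
  have h1 : ‖M.mulVec w i‖ = |∑ k, M i k * w k| := by
    simp [Matrix.mulVec, dotProduct, Real.norm_eq_abs]
  rw [h1]
  calc |∑ k, M i k * w k| ≤ ∑ k, |M i k * w k| := Finset.abs_sum_le_sum_abs _ _
    _ ≤ ∑ k, |M i k| * ‖w‖ := by
        refine Finset.sum_le_sum fun k _ => ?_
        rw [abs_mul]
        exact mul_le_mul_of_nonneg_left (by simpa using norm_le_pi_norm w k) (abs_nonneg _)
    _ = (∑ k, |M i k|) * ‖w‖ := by rw [Finset.sum_mul]
    _ ≤ (∑ i', ∑ k, |M i' k|) * ‖w‖ := by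
        refine mul_le_mul_of_nonneg_right ?_ (norm_nonneg _)
        exact Finset.single_le_sum (f := fun i' => ∑ k, |M i' k|)
          (fun i' _ => Finset.sum_nonneg fun k _ => abs_nonneg _) (Finset.mem_univ i)

lemma aux_posdef_lb {n : ℕ} (hn : 0 < n) (M : Matrix (Fin n) (Fin n) ℝ) (hM : M.PosDef) :
    ∃ c > 0, ∀ x : Fin n → ℝ, c * ‖x‖ ^ 2 ≤ x ⬝ᵥ M.mulVec x := by
  haveI : Nonempty (Fin n) := ⟨⟨0, hn⟩⟩
  set q : (Fin n → ℝ) → ℝ := fun x => x ⬝ᵥ M.mulVec x with hq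
  have hqc : Continuous q := by
    simp only [hq, dotProduct, Matrix.mulVec]
    exact continuous_finset_sum _ fun i _ =>
      (continuous_apply i).mul (continuous_finset_sum _ fun k _ =>
        (continuous_const.mul (continuous_apply k)))
  have hsph : IsCompact (Metric.sphere (0 : Fin n → ℝ) 1) := isCompact_sphere _ _
  have hne : (Metric.sphere (0 : Fin n → ℝ) 1).Nonempty := by
    refine ⟨fun _ => 1, ?_⟩
    simp [mem_sphere_iff_norm]
  obtain ⟨u, hu, humin⟩ := hsph.exists_isMinOn hne hqc.continuousOn
  have hu1 : ‖u‖ = 1 := by simpa using hu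
  have hu0 : u ≠ 0 := by
    intro h; rw [h] at hu1; simp at hu1
  have hc : 0 < q u := by
    have := hM.dotProduct_mulVec_pos hu0
    simpa [hq] using this
  refine ⟨q u, hc, fun x => ?_⟩
  by_cases hx : x = 0
  · simp [hx, hq]
  · have hxn : 0 < ‖x‖ := norm_pos_iff.mpr hx
    set y : Fin n → ℝ := ‖x‖⁻¹ • x with hy
    have hymem : y ∈ Metric.sphere (0 : Fin n → ℝ) 1 := by
      simp [hy, mem_sphere_iff_norm, norm_smul, abs_of_pos (inv_pos.mpr hxn),
        inv_mul_cancel₀ hxn.ne']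
    have hqy : q u ≤ q y := humin hymem
    have hscale : q y = ‖x‖⁻¹ * (‖x‖⁻¹ * q x) := by
      simp only [hq, hy, Matrix.mulVec_smul, smul_dotProduct, dotProduct_smul, smul_eq_mul]
    have h2 : q u * ‖x‖ ^ 2 ≤ q y * ‖x‖ ^ 2 :=
      mul_le_mul_of_nonneg_right hqy (sq_nonneg _)
    have h3 : q y * ‖x‖ ^ 2 = q x := by
      have hne' : ‖x‖ ≠ 0 := hxn.ne'
      rw [hscale, sq]
      calc ‖x‖⁻¹ * (‖x‖⁻¹ * q x) * (‖x‖ * ‖x‖)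
          = q x * ((‖x‖⁻¹ * ‖x‖) * (‖x‖⁻¹ * ‖x‖)) := by ring
        _ = q x := by rw [inv_mul_cancel₀ hne']; ring
    calc q u * ‖x‖ ^ 2 ≤ q y * ‖x‖ ^ 2 := h2
      _ = q x := h3

lemma aux_antitoneOn {D : Set ℝ} (hD : Convex ℝ D) {f f' : ℝ → ℝ}
    (hf : ∀ x ∈ D, HasDerivAt f (f' x) x) (h0 : ∀ x ∈ D, f' x ≤ 0) : AntitoneOn f D :=
  antitoneOn_of_hasDerivWithinAt_nonpos hD
    (fun x hx => (hf x hx).continuousAt.continuousWithinAt)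
    (fun x hx => (hf x (interior_subset hx)).hasDerivWithinAt)
    (fun x hx => h0 x (interior_subset hx))

lemma aux_monotoneOn {D : Set ℝ} (hD : Convex ℝ D) {f f' : ℝ → ℝ}
    (hf : ∀ x ∈ D, HasDerivAt f (f' x) x) (h0 : ∀ x ∈ D, 0 ≤ f' x) : MonotoneOn f D :=
  monotoneOn_of_hasDerivWithinAt_nonneg hD
    (fun x hx => (hf x hx).continuousAt.continuousWithinAt)
    (fun x hx => (hf x (interior_subset hx)).hasDerivWithinAt)
    (fun x hx => h0 x (interior_subset hx))

lemma aux_hasDerivAt_quad {n : ℕ} (M : Matrix (Fin n) (Fin n) ℝ) (f : ℝ → Fin n → ℝ)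
    (d : Fin n → ℝ) (t : ℝ) (hf : ∀ i, HasDerivAt (fun s => f s i) (d i) t) :
    HasDerivAt (fun s => f s ⬝ᵥ M.mulVec (f s))
      (d ⬝ᵥ M.mulVec (f t) + f t ⬝ᵥ M.mulVec d) t := by
  have h : HasDerivAt (fun s => ∑ i, f s i * ∑ k, M i k * f s k)
      (∑ i, (d i * ∑ k, M i k * f t k + f t i * ∑ k, M i k * d k)) t :=
    HasDerivAt.fun_sum fun i _ =>
      (hf i).mul (HasDerivAt.fun_sum fun k _ => (hf k).const_mul (M i k))
  have hfun : (fun s => f s ⬝ᵥ M.mulVec (f s))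
      = fun s => ∑ i, f s i * ∑ k, M i k * f s k := by
    funext s; simp [dotProduct, Matrix.mulVec]
  have hval : d ⬝ᵥ M.mulVec (f t) + f t ⬝ᵥ M.mulVec d
      = ∑ i, (d i * ∑ k, M i k * f t k + f t i * ∑ k, M i k * d k) := by
    simp [dotProduct, Matrix.mulVec, Finset.sum_add_distrib]
  rw [hfun, hval]
  exact h

/-- Convergence conclusion of Theorem 1 (global asymptotic synchronization in
the SPR regime): for bounded continuous regressor `η` and solutions of the
adaptive error dynamics on `[0,∞)`, the composite error `θ(t) → 0`. -/
theorem stmt_7 (m : ℕ) (J Φ Γ : Matrix (Fin m) (Fin m) ℝ)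
    (hJd : J.IsDiag) (hΦd : Φ.IsDiag) (hΓd : Γ.IsDiag)
    (hJpos : ∀ i, 0 < J i i) (hΦpos : ∀ i, 0 < Φ i i) (hΓpos : ∀ i, 0 < Γ i i)
    (P Q : Matrix (Fin m) (Fin m) ℝ) (hP : P.PosDef) (hQ : Q.PosDef)
    (hLyap : (-(J⁻¹ * Φ))ᵀ * P + P * (-(J⁻¹ * Φ)) = -Q)
    (η : ℝ → Fin (2 * m) → ℝ)
    (hηc : ContinuousOn η (Set.Ici 0))
    (hηb : ∃ C, ∀ t ≥ (0 : ℝ), ‖η t‖ ≤ C)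
    (θ : ℝ → Fin m → ℝ) (Ξ : ℝ → Matrix (Fin m) (Fin (2 * m)) ℝ)
    (hθ : ∀ t ≥ (0 : ℝ), HasDerivAt θ
      (-((J⁻¹ * Φ).mulVec (θ t)) - J⁻¹.mulVec ((Ξ t).mulVec (η t))) t)
    (hΞ : ∀ t ≥ (0 : ℝ), ∀ i j, HasDerivAt (fun s => Ξ s i j)
      ((Matrix.vecMulVec (Γ.mulVec (P.mulVec (θ t))) (η t)) i j) t) :
    Tendsto θ atTop (nhds 0) := by
  obtain ⟨C, hC⟩ := hηb
  rcases Nat.eq_zero_or_pos m with hm | hm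
  · subst hm
    have hθ0 : θ = fun _ => (0 : Fin 0 → ℝ) := funext fun t => Subsingleton.elim _ _
    rw [hθ0]
    exact tendsto_const_nhds
  -- basic positivity data
  obtain ⟨cP, hcPpos, hcP⟩ := aux_posdef_lb hm P hP
  obtain ⟨cQ, hcQpos, hcQ⟩ := aux_posdef_lb hm Q hQ
  -- inverse of J is the diagonal of inverses
  have hJinv : J⁻¹ = Matrix.diagonal (fun i => (J i i)⁻¹) := by
    apply Matrix.inv_eq_right_inv
    ext i k
    rw [Matrix.mul_diagonal]
    by_cases h : i = k
    · subst h; rw [mul_inv_cancel₀ (hJpos i).ne', Matrix.one_apply_eq]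
    · rw [hJd h, zero_mul, Matrix.one_apply_ne h]
  -- key functions
  set D : Fin m → ℝ := fun i => (J i i)⁻¹ * (Γ i i)⁻¹ with hDdef
  have hDpos : ∀ i, 0 < D i := fun i =>
    mul_pos (inv_pos.mpr (hJpos i)) (inv_pos.mpr (hΓpos i))
  set θd : ℝ → Fin m → ℝ :=
    fun t => -((J⁻¹ * Φ).mulVec (θ t)) - J⁻¹.mulVec ((Ξ t).mulVec (η t)) with hθddef
  set g : ℝ → ℝ := fun t => θ t ⬝ᵥ Q.mulVec (θ t) with hgdef
  set gd : ℝ → ℝ := fun t => θd t ⬝ᵥ Q.mulVec (θ t) + θ t ⬝ᵥ Q.mulVec (θd t) with hgddef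
  set R : ℝ → ℝ := fun t => ∑ i, ∑ j, D i * (Ξ t i j)^2 with hRdef
  set V : ℝ → ℝ := fun t => θ t ⬝ᵥ P.mulVec (θ t) + R t with hVdef
  have hθcomp : ∀ t, t ∈ Set.Ici (0:ℝ) → ∀ i, HasDerivAt (fun s => θ s i) (θd t i) t :=
    fun t ht => hasDerivAt_pi.mp (hθ t ht)
  have hgd : ∀ t ∈ Set.Ici (0:ℝ), HasDerivAt g (gd t) t :=
    fun t ht => aux_hasDerivAt_quad Q θ (θd t) t (hθcomp t ht)
  have hgnn : ∀ t, 0 ≤ g t := fun t =>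
    le_trans (by positivity) (hcQ (θ t))
  have hPquad_nn : ∀ x, (0:ℝ) ≤ x ⬝ᵥ P.mulVec x := fun x =>
    le_trans (by positivity) (hcP x)
  have hRnn : ∀ t, 0 ≤ R t := fun t =>
    Finset.sum_nonneg fun i _ => Finset.sum_nonneg fun j _ =>
      mul_nonneg (hDpos i).le (sq_nonneg _)
  have hVnn : ∀ t, 0 ≤ V t := fun t => add_nonneg (hPquad_nn _) (hRnn t)
  -- derivative of V is -g
  have hVd : ∀ t ∈ Set.Ici (0:ℝ), HasDerivAt V (-(g t)) t := by
    intro t ht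
    have h1 := aux_hasDerivAt_quad P θ (θd t) t (hθcomp t ht)
    have h2 : HasDerivAt R
        (∑ i, ∑ j, D i * (2 * Ξ t i j * (Γ.mulVec (P.mulVec (θ t)) i * η t j))) t := by
      apply HasDerivAt.fun_sum; intro i _; apply HasDerivAt.fun_sum; intro j _
      have h3 := ((hΞ t ht i j).pow 2).const_mul (D i)
      refine h3.congr_deriv ?_
      simp [Matrix.vecMulVec_apply]
      try ring
    have h4 := h1.fun_add h2
    refine h4.congr_deriv ?_
    -- KEY IDENTITY
    have hPsym : ∀ i k, P i k = P k i := by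
      intro i k
      have h5 := congrFun (congrFun hP.1 k) i
      simpa [Matrix.conjTranspose_apply] using h5
    have hΓv : ∀ (u : Fin m → ℝ) i, (Γ *ᵥ u) i = Γ i i * u i := by
      intro u i
      simp only [Matrix.mulVec, dotProduct]
      exact Finset.sum_eq_single i (fun k _ hk => by rw [hΓd (Ne.symm hk), zero_mul])
        (fun h => absurd (Finset.mem_univ i) h)
    set x := θ t with hx
    set w := (Ξ t).mulVec (η t) with hw
    have hθdt : θd t = (-(J⁻¹ * Φ)) *ᵥ x - J⁻¹ *ᵥ w := by
      rw [hθddef, Matrix.neg_mulVec]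
    have e1 : x ⬝ᵥ (((-(J⁻¹ * Φ))ᵀ * P) *ᵥ x) = ((-(J⁻¹ * Φ)) *ᵥ x) ⬝ᵥ (P *ᵥ x) := by
      rw [← Matrix.mulVec_mulVec, dotProduct_mulVec, Matrix.vecMul_transpose]
    have e2 : x ⬝ᵥ ((P * (-(J⁻¹ * Φ))) *ᵥ x) = x ⬝ᵥ (P *ᵥ ((-(J⁻¹ * Φ)) *ᵥ x)) := by
      rw [← Matrix.mulVec_mulVec]
    have eQ : ((-(J⁻¹ * Φ)) *ᵥ x) ⬝ᵥ (P *ᵥ x) + x ⬝ᵥ (P *ᵥ ((-(J⁻¹ * Φ)) *ᵥ x))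
        = -(x ⬝ᵥ (Q *ᵥ x)) := by
      rw [← e1, ← e2, ← dotProduct_add, ← Matrix.add_mulVec, hLyap,
        Matrix.neg_mulVec, dotProduct_neg]
    have ePsym : x ᵥ* P = P *ᵥ x := by
      funext i
      simp only [Matrix.vecMul, Matrix.mulVec, dotProduct]
      exact Finset.sum_congr rfl fun k _ => by rw [hPsym k i, mul_comm]
    have eCross : x ⬝ᵥ (P *ᵥ (J⁻¹ *ᵥ w)) = (P *ᵥ x) ⬝ᵥ (J⁻¹ *ᵥ w) := by
      rw [dotProduct_mulVec, ePsym]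
    have eCross2 : (J⁻¹ *ᵥ w) ⬝ᵥ (P *ᵥ x) = (P *ᵥ x) ⬝ᵥ (J⁻¹ *ᵥ w) :=
      dotProduct_comm _ _
    have eXi : ∑ i, ∑ j, D i * (2 * Ξ t i j * ((Γ *ᵥ (P *ᵥ x)) i * η t j))
        = 2 * ((P *ᵥ x) ⬝ᵥ (J⁻¹ *ᵥ w)) := by
      have hterm : ∀ i, ∑ j, D i * (2 * Ξ t i j * ((Γ *ᵥ (P *ᵥ x)) i * η t j))
          = 2 * ((P *ᵥ x) i * ((J i i)⁻¹ * w i)) := by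
        intro i
        have hwi : w i = ∑ j, Ξ t i j * η t j := by
          simp [hw, Matrix.mulVec, dotProduct]
        rw [hΓv, hwi]
        simp only [Finset.mul_sum]
        refine Finset.sum_congr rfl fun j _ => ?_
        have hΓne : (Γ i i : ℝ) ≠ 0 := (hΓpos i).ne'
        simp only [hDdef]
        linear_combination (2 * Ξ t i j * (P *ᵥ x) i * η t j * (J i i)⁻¹) *
          (mul_inv_cancel₀ hΓne)
      rw [Finset.sum_congr rfl (fun i _ => hterm i), ← Finset.mul_sum]
      congr 1
      rw [hJinv]
      simp [dotProduct, Matrix.mulVec_diagonal]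
    rw [hθdt, sub_dotProduct, Matrix.mulVec_sub, dotProduct_sub, eXi,
      eCross, eCross2]
    simp only [hgdef]
    linarith [eQ]
  have hVanti : AntitoneOn V (Set.Ici 0) :=
    aux_antitoneOn (convex_Ici 0) hVd (fun s _ => neg_nonpos.mpr (hgnn s))
  have hVle : ∀ t ∈ Set.Ici (0:ℝ), V t ≤ V 0 := fun t ht =>
    hVanti Set.self_mem_Ici ht ht
  set Bθ : ℝ := Real.sqrt (V 0 / cP) with hBθ
  have hBθnn : 0 ≤ Bθ := Real.sqrt_nonneg _
  have hθb : ∀ t ∈ Set.Ici (0:ℝ), ‖θ t‖ ≤ Bθ := by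
    intro t ht
    have h5 : cP * ‖θ t‖^2 ≤ V 0 :=
      le_trans (le_trans (hcP (θ t)) (le_add_of_nonneg_right (hRnn t))) (hVle t ht)
    have h6 : ‖θ t‖^2 ≤ V 0 / cP := by
      rw [le_div_iff₀ hcPpos]; linarith
    rw [hBθ, ← Real.sqrt_sq (norm_nonneg (θ t))]
    exact Real.sqrt_le_sqrt h6
  have hΞb : ∀ t ∈ Set.Ici (0:ℝ), ∀ i j, |Ξ t i j| ≤ Real.sqrt (V 0 / D i) := by
    intro t ht i j
    have h5 : D i * (Ξ t i j)^2 ≤ R t := by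
      calc D i * (Ξ t i j)^2 ≤ ∑ j', D i * (Ξ t i j')^2 :=
            Finset.single_le_sum (f := fun j' => D i * (Ξ t i j')^2)
              (fun j' _ => mul_nonneg (hDpos i).le (sq_nonneg _)) (Finset.mem_univ j)
        _ ≤ ∑ i', ∑ j', D i' * (Ξ t i' j')^2 :=
            Finset.single_le_sum (f := fun i' => ∑ j', D i' * (Ξ t i' j')^2)
              (fun i' _ => Finset.sum_nonneg fun j' _ =>
                mul_nonneg (hDpos i').le (sq_nonneg _)) (Finset.mem_univ i)
        _ = R t := by rw [hRdef]
    have h6 : (Ξ t i j)^2 ≤ V 0 / D i := by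
      rw [le_div_iff₀ (hDpos i)]
      have h7 := le_trans (le_trans h5 (le_add_of_nonneg_left (hPquad_nn (θ t)))) (hVle t ht)
      linarith
    rw [← Real.sqrt_sq_eq_abs]
    exact Real.sqrt_le_sqrt h6
  set C0 : ℝ := max C 0 with hC0def
  have hC0 : ∀ t ∈ Set.Ici (0:ℝ), ‖η t‖ ≤ C0 := fun t ht => (hC t ht).trans (le_max_left _ _)
  have hC0nn : 0 ≤ C0 := le_max_right _ _
  set SXi : ℝ := ∑ i : Fin m, ∑ _j : Fin (2*m), Real.sqrt (V 0 / D i) with hSXi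
  have hSXinn : 0 ≤ SXi :=
    Finset.sum_nonneg fun i _ => Finset.sum_nonneg fun j _ => Real.sqrt_nonneg _
  have hwb : ∀ t ∈ Set.Ici (0:ℝ), ‖(Ξ t).mulVec (η t)‖ ≤ SXi * C0 := by
    intro t ht
    refine le_trans (aux_norm_mulVec_le (Ξ t) (η t)) ?_
    refine mul_le_mul ?_ (hC0 t ht) (norm_nonneg _) hSXinn
    exact Finset.sum_le_sum fun i _ => Finset.sum_le_sum fun j _ => hΞb t ht i j
  set SA : ℝ := ∑ i, ∑ k, |(J⁻¹ * Φ) i k| with hSA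
  have hSAnn : 0 ≤ SA :=
    Finset.sum_nonneg fun i _ => Finset.sum_nonneg fun k _ => abs_nonneg _
  set SJ : ℝ := ∑ i, ∑ k, |(J⁻¹ : Matrix (Fin m) (Fin m) ℝ) i k| with hSJ
  have hSJnn : 0 ≤ SJ :=
    Finset.sum_nonneg fun i _ => Finset.sum_nonneg fun k _ => abs_nonneg _
  set SQn : ℝ := ∑ i, ∑ k, |Q i k| with hSQn
  have hSQnn : 0 ≤ SQn :=
    Finset.sum_nonneg fun i _ => Finset.sum_nonneg fun k _ => abs_nonneg _
  set K1 : ℝ := SA * Bθ + SJ * (SXi * C0) with hK1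
  have hK1nn : 0 ≤ K1 :=
    add_nonneg (mul_nonneg hSAnn hBθnn) (mul_nonneg hSJnn (mul_nonneg hSXinn hC0nn))
  have hθdb : ∀ t ∈ Set.Ici (0:ℝ), ‖θd t‖ ≤ K1 := by
    intro t ht
    rw [hθddef]
    calc ‖-((J⁻¹ * Φ) *ᵥ θ t) - J⁻¹ *ᵥ (Ξ t *ᵥ η t)‖
        ≤ ‖-((J⁻¹ * Φ) *ᵥ θ t)‖ + ‖J⁻¹ *ᵥ (Ξ t *ᵥ η t)‖ := norm_sub_le _ _
      _ = ‖(J⁻¹ * Φ) *ᵥ θ t‖ + ‖J⁻¹ *ᵥ (Ξ t *ᵥ η t)‖ := by rw [norm_neg]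
      _ ≤ SA * Bθ + SJ * (SXi * C0) := by
          refine add_le_add (le_trans (aux_norm_mulVec_le _ _) ?_)
            (le_trans (aux_norm_mulVec_le _ _) ?_)
          · exact mul_le_mul hSA.symm.le (hθb t ht) (norm_nonneg _) hSAnn
          · exact mul_le_mul hSJ.symm.le (hwb t ht) (norm_nonneg _) hSJnn
      _ = K1 := hK1.symm
  set K : ℝ := SQn * (K1 * Bθ) + SQn * (Bθ * K1) with hK
  have hgdb : ∀ t ∈ Set.Ici (0:ℝ), |gd t| ≤ K := by
    intro t ht
    rw [hgddef]
    calc |θd t ⬝ᵥ Q *ᵥ θ t + θ t ⬝ᵥ Q *ᵥ θd t|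
        ≤ |θd t ⬝ᵥ Q *ᵥ θ t| + |θ t ⬝ᵥ Q *ᵥ θd t| := abs_add_le _ _
      _ ≤ SQn * (‖θd t‖ * ‖θ t‖) + SQn * (‖θ t‖ * ‖θd t‖) := by
          refine add_le_add (le_trans (aux_abs_dot_le Q (θd t) (θ t)) ?_)
            (le_trans (aux_abs_dot_le Q (θ t) (θd t)) ?_)
          · exact le_of_eq (by rw [hSQn])
          · exact le_of_eq (by rw [hSQn])
      _ ≤ SQn * (K1 * Bθ) + SQn * (Bθ * K1) := by
          refine add_le_add (mul_le_mul_of_nonneg_left ?_ hSQnn)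
            (mul_le_mul_of_nonneg_left ?_ hSQnn)
          · exact mul_le_mul (hθdb t ht) (hθb t ht) (norm_nonneg _) hK1nn
          · exact mul_le_mul (hθb t ht) (hθdb t ht) (norm_nonneg _) hBθnn
      _ = K := hK.symm
  -- Barbalat's lemma argument
  have hgev : ∀ ε > (0:ℝ), ∀ᶠ t in atTop, g t < ε := by
    intro ε hε
    by_contra hcon
    rw [Filter.not_eventually] at hcon
    have hfreq : ∃ᶠ t in atTop, ε ≤ g t := hcon.mono fun t ht => not_lt.mp ht
    set K' : ℝ := max K 1 with hK'
    have hK'pos : (0:ℝ) < K' := lt_of_lt_of_le one_pos (le_max_right _ _)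
    have hgdK' : ∀ t ∈ Set.Ici (0:ℝ), |gd t| ≤ K' := fun t ht =>
      (hgdb t ht).trans (le_max_left _ _)
    set δ : ℝ := ε / (2 * K') with hδdef
    have hδpos : 0 < δ := div_pos hε (by linarith)
    have hKδ : K' * δ = ε / 2 := by
      rw [hδdef, mul_comm 2 K', mul_div_assoc', mul_div_mul_left _ _ hK'pos.ne']
    have hmono : MonotoneOn (fun s => g s + K' * s) (Set.Ici 0) := by
      refine aux_monotoneOn (convex_Ici 0) (f' := fun s => gd s + K')
        (fun s hs => ?_) (fun s hs => ?_)
      · simpa using (hgd s hs).fun_add ((hasDerivAt_id s).const_mul K')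
      · show (0:ℝ) ≤ gd s + K'
        have h8 := abs_le.mp (hgdK' s hs); linarith [h8.1]
    have claim : ∀ t ∈ Set.Ici (0:ℝ), ε ≤ g t → V (t + δ) + ε / 2 * δ ≤ V t := by
      intro t ht hεg
      have hglb : ∀ s ∈ Set.Icc t (t + δ), ε / 2 ≤ g s := by
        intro s hs
        have hs0 : s ∈ Set.Ici (0:ℝ) := le_trans ht hs.1
        have h1 : g t + K' * t ≤ g s + K' * s := hmono ht hs0 hs.1
        have h2 : K' * s - K' * t ≤ K' * δ := by nlinarith [hs.2, hK'pos.le]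
        linarith
      have hanti2 : AntitoneOn (fun s => V s + ε / 2 * s) (Set.Icc t (t + δ)) := by
        refine aux_antitoneOn (convex_Icc t (t+δ)) (f' := fun s => -(g s) + ε/2)
          (fun s hs => ?_) (fun s hs => ?_)
        · simpa using (hVd s (le_trans ht hs.1)).fun_add ((hasDerivAt_id s).const_mul (ε/2))
        · show -(g s) + ε/2 ≤ 0
          have h9 := hglb s hs; linarith
      have h3 := hanti2 (Set.left_mem_Icc.mpr (by linarith))
        (Set.right_mem_Icc.mpr (by linarith)) (by linarith)
      simp only at h3
      linarith
    set W : ℝ → ℝ := fun t => V (max t 0) with hW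
    have hWanti : Antitone W := fun a b hab =>
      hVanti (le_max_right a 0) (le_max_right b 0) (max_le_max hab le_rfl)
    have hWbdd : BddBelow (Set.range W) := ⟨0, by rintro y ⟨t, rfl⟩; exact hVnn _⟩
    have hWlim := tendsto_atTop_ciInf hWanti hWbdd
    have hVeq : W =ᶠ[atTop] V := by
      filter_upwards [eventually_ge_atTop (0:ℝ)] with t ht
      rw [hW]; simp [max_eq_left ht]
    have hVlim : Tendsto V atTop (nhds (⨅ t, W t)) := hWlim.congr' hVeq
    have hVlim2 : Tendsto (fun t => V (t + δ)) atTop (nhds (⨅ t, W t)) :=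
      hVlim.comp (tendsto_atTop_add_const_right atTop δ tendsto_id)
    have hsub : Tendsto (fun t => V t - V (t + δ)) atTop (nhds 0) := by
      have h10 := hVlim.sub hVlim2; simpa using h10
    have hev : ∀ᶠ t in atTop, V t - V (t + δ) < ε / 2 * δ :=
      hsub.eventually_lt_const (mul_pos (half_pos hε) hδpos)
    obtain ⟨t, hεt, hlt, ht0⟩ :=
      (hfreq.and_eventually (hev.and (eventually_ge_atTop (0:ℝ)))).exists
    have h11 := claim t ht0 hεt
    linarith
  have hg0 : Tendsto g atTop (nhds 0) := by
    rw [Metric.tendsto_atTop]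
    intro ε hε
    obtain ⟨N, hN⟩ := Filter.eventually_atTop.mp ((hgev ε hε).and (eventually_ge_atTop (0:ℝ)))
    refine ⟨N, fun n hn => ?_⟩
    have h := hN n hn
    rw [Real.dist_eq, sub_zero, abs_of_nonneg (hgnn n)]
    exact h.1
  rw [tendsto_zero_iff_norm_tendsto_zero]
  have hsq : Tendsto (fun t => ‖θ t‖^2) atTop (nhds 0) := by
    refine squeeze_zero' (g := fun t => g t / cQ) (Filter.Eventually.of_forall fun t => sq_nonneg _)
      (Filter.Eventually.of_forall fun t => ?_) ?_
    · show ‖θ t‖^2 ≤ g t / cQ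
      rw [le_div_iff₀ hcQpos]
      have h12 := hcQ (θ t); linarith
    · have h13 := hg0.div_const cQ; simpa using h13
  have h7 : Tendsto (fun t => Real.sqrt (‖θ t‖^2)) atTop (nhds (Real.sqrt 0)) :=
    (Real.continuous_sqrt.continuousAt.tendsto).comp hsq
  have h8 : (fun t => Real.sqrt (‖θ t‖^2)) = fun t => ‖θ t‖ :=
    funext fun t => Real.sqrt_sq (norm_nonneg _)
  rw [h8] at h7
  simpa using h7
end

section
/- Fix n, m, p and let A be an n×n real matrix, B an n×m real matrix, C an m×n real matrix, P and Q symmetric positive definite n×n real matrices, and Γ a symmetric positive definite m×m real matrix, with Aᵀ P + P A = −Q and P B = Cᵀ. Let η : [0,∞) → ℝ^p be continuous and bounded, and let e_x : [0,∞) → ℝⁿ and Ξ̃ : [0,∞) → (m × p real matrices) be differentiable solutions of e_x' = A e_x + B (Ξ̃ η) and Ξ̃' = −Γ (C e_x) ηᵀ. Then e_x(t) → 0 as t → ∞ (and consequently C e_x(t) → 0). -/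
open Matrix Filter Set intervalIntegral

private lemma continuous_quad {n : ℕ} (M : Matrix (Fin n) (Fin n) ℝ) :
    Continuous fun x : Fin n → ℝ => x ⬝ᵥ M *ᵥ x := by
  simp only [dotProduct, mulVec]
  exact continuous_finset_sum _ fun i _ =>
    (continuous_apply i).mul (continuous_finset_sum _ fun j _ =>
      continuous_const.mul (continuous_apply j))

private lemma posdef_lower {n : ℕ} {M : Matrix (Fin n) (Fin n) ℝ} (hM : M.PosDef) :
    ∃ c > 0, ∀ x : Fin n → ℝ, c * ‖x‖ ^ 2 ≤ x ⬝ᵥ M *ᵥ x := by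
  rcases isEmpty_or_nonempty (Fin n) with he | hne
  · refine ⟨1, one_pos, fun x => ?_⟩
    have hx : x = 0 := Subsingleton.elim _ _
    simp [hx, dotProduct]
  · have hsC : IsCompact (Metric.sphere (0 : Fin n → ℝ) 1) := isCompact_sphere _ _
    have hsne : (Metric.sphere (0 : Fin n → ℝ) 1).Nonempty := by
      refine ⟨fun _ => 1, ?_⟩
      simp [mem_sphere_iff_norm]
    obtain ⟨x0, hx0, hmin⟩ := hsC.exists_isMinOn hsne (continuous_quad M).continuousOn
    have hx0norm : ‖x0‖ = 1 := by simpa [mem_sphere_iff_norm] using hx0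
    have hx0ne : x0 ≠ 0 := by intro h; rw [h] at hx0norm; simp at hx0norm
    have hc : 0 < x0 ⬝ᵥ M *ᵥ x0 := by
      have := hM.dotProduct_mulVec_pos hx0ne
      simpa using this
    refine ⟨x0 ⬝ᵥ M *ᵥ x0, hc, fun x => ?_⟩
    rcases eq_or_ne x 0 with rfl | hx
    · simp [dotProduct]
    · have hxn : (0:ℝ) < ‖x‖ := norm_pos_iff.mpr hx
      set y : Fin n → ℝ := ‖x‖⁻¹ • x with hy
      have hyS : y ∈ Metric.sphere (0 : Fin n → ℝ) 1 := by
        simp [hy, mem_sphere_iff_norm, norm_smul, abs_of_nonneg (inv_nonneg.mpr hxn.le),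
          inv_mul_cancel₀ hxn.ne']
      have hmy := hmin hyS
      have hquad : y ⬝ᵥ M *ᵥ y = ‖x‖⁻¹ * (‖x‖⁻¹ * (x ⬝ᵥ M *ᵥ x)) := by
        simp [hy, smul_dotProduct, mulVec_smul, dotProduct_smul, smul_eq_mul]
      have h2 : x0 ⬝ᵥ M *ᵥ x0 ≤ ‖x‖⁻¹ * (‖x‖⁻¹ * (x ⬝ᵥ M *ᵥ x)) := by
        simpa [hquad] using hmy
      have h3 := mul_le_mul_of_nonneg_left h2 (le_of_lt (by positivity : (0:ℝ) < ‖x‖ ^ 2))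
      calc x0 ⬝ᵥ M *ᵥ x0 * ‖x‖ ^ 2 ≤ ‖x‖ ^ 2 * (‖x‖⁻¹ * (‖x‖⁻¹ * (x ⬝ᵥ M *ᵥ x))) := by
              linarith [h3]
        _ = x ⬝ᵥ M *ᵥ x := by field_simp
  

private lemma mulVec_entry_bound {a b : ℕ} (M : Matrix (Fin a) (Fin b) ℝ) (w : Fin b → ℝ)
    (i : Fin a) : |(M *ᵥ w) i| ≤ (∑ k, ∑ l, |M k l|) * ‖w‖ := by
  have h1 : |(M *ᵥ w) i| ≤ ∑ l, |M i l| * ‖w‖ := by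
    simp only [mulVec, dotProduct]
    refine (Finset.abs_sum_le_sum_abs _ _).trans ?_
    refine Finset.sum_le_sum fun l _ => ?_
    rw [abs_mul]
    have := norm_le_pi_norm w l
    have h2 : |w l| ≤ ‖w‖ := by simpa [Real.norm_eq_abs] using this
    exact mul_le_mul_of_nonneg_left h2 (abs_nonneg _)
  refine h1.trans ?_
  rw [← Finset.sum_mul]
  refine mul_le_mul_of_nonneg_right ?_ (norm_nonneg _)
  exact Finset.single_le_sum (f := fun k => ∑ l, |M k l|)
    (fun k _ => Finset.sum_nonneg fun l _ => abs_nonneg _) (Finset.mem_univ i)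

private lemma mulVec_norm_bound {a b : ℕ} (M : Matrix (Fin a) (Fin b) ℝ) (w : Fin b → ℝ) :
    ‖M *ᵥ w‖ ≤ (∑ k, ∑ l, |M k l|) * ‖w‖ := by
  have hnn : 0 ≤ (∑ k, ∑ l, |M k l|) * ‖w‖ := by positivity
  refine (pi_norm_le_iff_of_nonneg hnn).2 fun i => ?_
  simpa [Real.norm_eq_abs] using mulVec_entry_bound M w i

private lemma dot_mulVec_bound {a b : ℕ} (M : Matrix (Fin a) (Fin b) ℝ) (v : Fin a → ℝ)
    (w : Fin b → ℝ) : |v ⬝ᵥ M *ᵥ w| ≤ ↑a * ((∑ k, ∑ l, |M k l|) * ‖v‖ * ‖w‖) := by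
  have h1 : |v ⬝ᵥ M *ᵥ w| ≤ ∑ i, |v i| * |(M *ᵥ w) i| := by
    refine (Finset.abs_sum_le_sum_abs _ _).trans ?_
    exact Finset.sum_le_sum fun i _ => le_of_eq (abs_mul _ _)
  refine h1.trans ?_
  have h2 : ∀ i : Fin a, |v i| * |(M *ᵥ w) i| ≤ ‖v‖ * ((∑ k, ∑ l, |M k l|) * ‖w‖) := by
    intro i
    have hv : |v i| ≤ ‖v‖ := by simpa [Real.norm_eq_abs] using norm_le_pi_norm v i
    exact mul_le_mul hv (mulVec_entry_bound M w i) (abs_nonneg _) (norm_nonneg _)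
  refine (Finset.sum_le_sum fun i _ => h2 i).trans ?_
  simp [Finset.sum_const]
  ring_nf
  exact le_of_eq (by ring)

private lemma hasDerivAt_quad {n : ℕ} (M : Matrix (Fin n) (Fin n) ℝ) {x : ℝ → Fin n → ℝ}
    {v : Fin n → ℝ} {t : ℝ} (hx : HasDerivAt x v t) :
    HasDerivAt (fun s => x s ⬝ᵥ M *ᵥ x s) (v ⬝ᵥ M *ᵥ x t + x t ⬝ᵥ M *ᵥ v) t := by
  have hxi : ∀ i, HasDerivAt (fun s => x s i) (v i) t := fun i => hasDerivAt_pi.1 hx i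
  have h : HasDerivAt (fun s => ∑ i, ∑ j, x s i * (M i j * x s j))
      (∑ i, ∑ j, (v i * (M i j * x t j) + x t i * (M i j * v j))) t := by
    refine HasDerivAt.fun_sum fun i _ => ?_
    refine HasDerivAt.fun_sum fun j _ => ?_
    exact (hxi i).mul ((hxi j).const_mul (M i j))
  have hfun : (fun s => ∑ i, ∑ j, x s i * (M i j * x s j))
      = fun s => x s ⬝ᵥ M *ᵥ x s := by
    funext s
    simp [dotProduct, mulVec, Finset.mul_sum]
  have hval : (∑ i, ∑ j, (v i * (M i j * x t j) + x t i * (M i j * v j)))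
      = v ⬝ᵥ M *ᵥ x t + x t ⬝ᵥ M *ᵥ v := by
    simp [dotProduct, mulVec, Finset.mul_sum, Finset.sum_add_distrib]
  rw [hfun, hval] at h
  exact h

private lemma barbalat (g V : ℝ → ℝ) (K : ℝ) (hK : 0 < K)
    (hg0 : ∀ t, 0 ≤ t → 0 ≤ g t)
    (hglip : ∀ s t, 0 ≤ s → 0 ≤ t → |g t - g s| ≤ K * |t - s|)
    (hV0 : ∀ t, 0 ≤ t → 0 ≤ V t)
    (hFTC : ∀ s t, 0 ≤ s → s ≤ t → (∫ u in s..t, g u) = V s - V t) :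
    Tendsto g atTop (nhds 0) := by
  -- continuity / integrability of g on [0,∞)
  have hgc : ContinuousOn g (Ici 0) := by
    refine (lipschitzOnWith_iff_dist_le_mul.2 ?_).continuousOn (K := K.toNNReal)
    intro x hx y hy
    have := hglip y x (mem_Ici.1 hy) (mem_Ici.1 hx)
    simpa [Real.dist_eq, Real.coe_toNNReal K hK.le] using this
  have hgint : ∀ s t : ℝ, 0 ≤ s → s ≤ t → IntervalIntegrable g MeasureTheory.volume s t := by
    intro s t hs hst
    refine (hgc.mono ?_).intervalIntegrable
    rw [uIcc_of_le hst]
    exact fun x hx => le_trans hs hx.1 |>.trans_eq rfl |> fun h => mem_Ici.2 (hs.trans hx.1)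
  -- V is antitone on [0,∞)
  have hanti : ∀ s t, 0 ≤ s → s ≤ t → V t ≤ V s := by
    intro s t hs hst
    have h := hFTC s t hs hst
    have hnn : 0 ≤ ∫ u in s..t, g u :=
      integral_nonneg hst (fun u hu => hg0 u (hs.trans hu.1))
    linarith
  -- the shifted function is globally antitone and bounded below
  set Vm : ℝ → ℝ := fun t => V (max t 0) with hVm
  have hVmanti : Antitone Vm := by
    intro a b hab
    exact hanti (max a 0) (max b 0) (le_max_right _ _) (max_le_max hab le_rfl)
  have hVmbdd : BddBelow (range Vm) := by
    refine ⟨0, fun y hy => ?_⟩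
    obtain ⟨t, rfl⟩ := hy
    exact hV0 _ (le_max_right _ _)
  have hVmten : Tendsto Vm atTop (nhds (⨅ t, Vm t)) := tendsto_atTop_ciInf hVmanti hVmbdd
  rw [Metric.tendsto_atTop]
  intro ε hε
  set δ : ℝ := ε / (2 * K) with hδ
  have hδpos : 0 < δ := by positivity
  set ε' : ℝ := δ * (ε / 2) with hε'
  have hε'pos : 0 < ε' := by positivity
  -- difference Vm t - Vm (t+δ) tends to 0
  have hshift : Tendsto (fun t => Vm (t + δ)) atTop (nhds (⨅ t, Vm t)) :=
    hVmten.comp (tendsto_atTop_add_const_right atTop δ tendsto_id)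
  have hdiff : Tendsto (fun t => Vm t - Vm (t + δ)) atTop (nhds 0) := by
    simpa using hVmten.sub hshift
  have hev : ∀ᶠ t in atTop, |Vm t - Vm (t + δ)| < ε' := by
    have := Metric.tendsto_nhds.1 hdiff ε' hε'pos
    filter_upwards [this] with t ht
    simpa [Real.dist_eq] using ht
  obtain ⟨T₀, hT₀⟩ := eventually_atTop.1 hev
  refine ⟨max T₀ 0, fun T hT => ?_⟩
  have hT0 : 0 ≤ T := le_trans (le_max_right _ _) hT
  have hTT₀ : T₀ ≤ T := le_trans (le_max_left _ _) hT
  have hTd : 0 ≤ T + δ := by linarith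
  -- the integral over [T, T+δ] is small
  have hIeq : (∫ u in T..(T + δ), g u) = Vm T - Vm (T + δ) := by
    rw [hFTC T (T + δ) hT0 (by linarith)]
    simp [hVm, max_eq_left hT0, max_eq_left hTd]
  have hIsmall : (∫ u in T..(T + δ), g u) < ε' := by
    rw [hIeq]
    exact lt_of_le_of_lt (le_abs_self _) (hT₀ T hTT₀)
  -- the integral is at least δ * (g T - K * δ)
  have hlow : δ * (g T - K * δ) ≤ ∫ u in T..(T + δ), g u := by
    have hmono : ∀ u ∈ Icc T (T + δ), g T - K * δ ≤ g u := by
      intro u hu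
      have hu0 : 0 ≤ u := hT0.trans hu.1
      have h := hglip T u hT0 hu0
      have habs : |u - T| ≤ δ := by
        rw [abs_of_nonneg (by linarith [hu.1])]
        linarith [hu.2]
      have h2 : K * |u - T| ≤ K * δ := mul_le_mul_of_nonneg_left habs hK.le
      have h3 := (abs_le.1 h).1
      linarith
    have hc : (∫ _ in T..(T + δ), (g T - K * δ)) = δ * (g T - K * δ) := by
      rw [integral_const]; simp
    rw [← hc]
    exact integral_mono_on (by linarith) intervalIntegrable_const
      (hgint T (T + δ) hT0 (by linarith)) hmono
  -- conclude
  have hKδ : K * δ = ε / 2 := by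
    rw [hδ]
    field_simp
  have hgT : g T < ε := by
    have : δ * (g T - K * δ) < δ * (ε / 2) := lt_of_le_of_lt hlow hIsmall
    have h4 := (mul_lt_mul_iff_right₀ hδpos).1 this
    linarith [hKδ ▸ h4]
  rw [Real.dist_eq]
  rw [abs_of_nonneg (by simpa using hg0 T hT0)]
  simpa using hgT
set_option maxHeartbeats 1000000 in
/-- Synchronization conclusion of the passivity-recovered (non-SPR) design:
with `AᵀP + PA = −Q`, `PB = Cᵀ`, bounded continuous regressor `η`, and
solutions of `e_x' = A e_x + B Ξ̃ η`, `Ξ̃' = −Γ(C e_x)ηᵀ` on `[0,∞)`,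
one has `e_x(t) → 0` and consequently `C e_x(t) → 0`. -/
theorem stmt_13 (n m p : ℕ)
    (A : Matrix (Fin n) (Fin n) ℝ) (B : Matrix (Fin n) (Fin m) ℝ)
    (C : Matrix (Fin m) (Fin n) ℝ)
    (P Q : Matrix (Fin n) (Fin n) ℝ) (hP : P.PosDef) (hQ : Q.PosDef)
    (Γ : Matrix (Fin m) (Fin m) ℝ) (hΓ : Γ.PosDef)
    (hLyap : Aᵀ * P + P * A = -Q) (hPB : P * B = Cᵀ)
    (η : ℝ → Fin p → ℝ)
    (hηc : ContinuousOn η (Set.Ici 0))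
    (hηb : ∃ Cb, ∀ t ≥ (0 : ℝ), ‖η t‖ ≤ Cb)
    (ex : ℝ → Fin n → ℝ) (Ξ : ℝ → Matrix (Fin m) (Fin p) ℝ)
    (hex : ∀ t ≥ (0 : ℝ),
      HasDerivAt ex (A.mulVec (ex t) + B.mulVec ((Ξ t).mulVec (η t))) t)
    (hΞ : ∀ t ≥ (0 : ℝ), ∀ i j, HasDerivAt (fun s => Ξ s i j)
      ((-(Matrix.vecMulVec (Γ.mulVec (C.mulVec (ex t))) (η t))) i j) t) :
    Tendsto ex atTop (nhds 0)
      ∧ Tendsto (fun t => C.mulVec (ex t)) atTop (nhds 0) := by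
  obtain ⟨Cb, hCb⟩ := hηb
  have hCb0 : 0 ≤ Cb := (norm_nonneg _).trans (hCb 0 le_rfl)
  -- symmetry and inverse facts
  have hPt : Pᵀ = P := by
    have h := hP.isHermitian.eq
    rwa [Matrix.conjTranspose_eq_transpose_of_trivial] at h
  have hG : (Γ⁻¹).PosDef := hΓ.inv
  have hGt : (Γ⁻¹)ᵀ = Γ⁻¹ := by
    have h := hG.isHermitian.eq
    rwa [Matrix.conjTranspose_eq_transpose_of_trivial] at h
  have hGΓ : Γ⁻¹ * Γ = 1 := Matrix.nonsing_inv_mul Γ (isUnit_iff_ne_zero.mpr hΓ.det_pos.ne')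
  have hGmul : ∀ x : Fin m → ℝ, Γ⁻¹ *ᵥ (Γ *ᵥ x) = x := by
    intro x; rw [mulVec_mulVec, hGΓ, one_mulVec]
  have hBtP : Bᵀ * P = C := by
    have h := congrArg Matrix.transpose hPB
    rwa [Matrix.transpose_mul, Matrix.transpose_transpose, hPt] at h
  -- the Lyapunov function and the decay rate
  set g : ℝ → ℝ := fun t => ex t ⬝ᵥ Q *ᵥ ex t with hgdef
  set V : ℝ → ℝ := fun t =>
    ex t ⬝ᵥ P *ᵥ ex t + ∑ j, (fun i => Ξ t i j) ⬝ᵥ Γ⁻¹ *ᵥ (fun i => Ξ t i j) with hVdef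
  -- derivative of each column of Ξ
  have hcolD : ∀ t, 0 ≤ t → ∀ j, HasDerivAt (fun s => (fun i => Ξ s i j))
      ((-(η t j)) • (Γ *ᵥ (C *ᵥ ex t))) t := by
    intro t ht j
    refine hasDerivAt_pi.2 fun i => ?_
    have h := hΞ t ht i j
    convert h using 1
    · rfl
    · rfl
    simp [Matrix.vecMulVec_apply]
    ring
  -- derivative of V
  have hVderiv : ∀ t, 0 ≤ t → HasDerivAt V (-(g t)) t := by
    intro t ht
    have hterm1 : ∀ c : Fin m → ℝ,
        (Γ *ᵥ (C *ᵥ ex t)) ⬝ᵥ Γ⁻¹ *ᵥ c = (C *ᵥ ex t) ⬝ᵥ c := by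
      intro c
      rw [dotProduct_mulVec, ← hGt, vecMul_transpose, hGmul]
    have hterm2 : ∀ c : Fin m → ℝ,
        c ⬝ᵥ Γ⁻¹ *ᵥ (Γ *ᵥ (C *ᵥ ex t)) = (C *ᵥ ex t) ⬝ᵥ c := by
      intro c
      rw [hGmul, dotProduct_comm]
    have hsum_eq : ∑ j, η t j * ((C *ᵥ ex t) ⬝ᵥ (fun i => Ξ t i j))
        = (C *ᵥ ex t) ⬝ᵥ (Ξ t *ᵥ η t) := by
      simp only [dotProduct, mulVec, Finset.mul_sum]
      rw [Finset.sum_comm]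
      exact Finset.sum_congr rfl fun i _ => Finset.sum_congr rfl fun j _ => by ring
    have h2 : ∀ j ∈ Finset.univ, HasDerivAt
        (fun s => (fun i => Ξ s i j) ⬝ᵥ Γ⁻¹ *ᵥ (fun i => Ξ s i j))
        (-(2 * (η t j * ((C *ᵥ ex t) ⬝ᵥ (fun i => Ξ t i j))))) t := by
      intro j _
      have h := hasDerivAt_quad (Γ⁻¹) (hcolD t ht j)
      convert h using 1
      rw [smul_dotProduct, mulVec_smul, dotProduct_smul, hterm1, hterm2]
      simp only [smul_eq_mul]
      ring
    have hsum0 := HasDerivAt.fun_sum h2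
    have hsum' : HasDerivAt
        (fun s => ∑ j, (fun i => Ξ s i j) ⬝ᵥ Γ⁻¹ *ᵥ (fun i => Ξ s i j))
        (-(2 * ((C *ᵥ ex t) ⬝ᵥ (Ξ t *ᵥ η t)))) t := by
      convert hsum0 using 1
      · rfl
      · rfl
      rw [← hsum_eq, Finset.mul_sum, ← Finset.sum_neg_distrib]
    have t1 : (A *ᵥ ex t) ⬝ᵥ (P *ᵥ ex t) + ex t ⬝ᵥ (P *ᵥ (A *ᵥ ex t))
        = -(ex t ⬝ᵥ Q *ᵥ ex t) := by
      rw [dotProduct_mulVec, vecMul_mulVec, ← dotProduct_mulVec, mulVec_mulVec,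
        ← dotProduct_add, ← add_mulVec, hLyap, neg_mulVec, dotProduct_neg]
    have t2 : (B *ᵥ (Ξ t *ᵥ η t)) ⬝ᵥ (P *ᵥ ex t)
        = (C *ᵥ ex t) ⬝ᵥ (Ξ t *ᵥ η t) := by
      rw [dotProduct_mulVec, vecMul_mulVec, hBtP, ← dotProduct_mulVec, dotProduct_comm]
    have t3 : ex t ⬝ᵥ (P *ᵥ (B *ᵥ (Ξ t *ᵥ η t)))
        = (C *ᵥ ex t) ⬝ᵥ (Ξ t *ᵥ η t) := by
      rw [mulVec_mulVec, hPB, dotProduct_mulVec, vecMul_transpose]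
    have h1 : HasDerivAt (fun s => ex s ⬝ᵥ P *ᵥ ex s)
        (-(ex t ⬝ᵥ Q *ᵥ ex t) + 2 * ((C *ᵥ ex t) ⬝ᵥ (Ξ t *ᵥ η t))) t := by
      convert hasDerivAt_quad P (hex t ht) using 1
      rw [add_dotProduct, mulVec_add, dotProduct_add]
      linarith [t1, t2, t3]
    have hfin := h1.add hsum'
    have : HasDerivAt V (-(ex t ⬝ᵥ Q *ᵥ ex t) + 2 * ((C *ᵥ ex t) ⬝ᵥ (Ξ t *ᵥ η t))
        + -(2 * ((C *ᵥ ex t) ⬝ᵥ (Ξ t *ᵥ η t)))) t := hfin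
    convert this using 1
    simp [hgdef]
  -- continuity
  have hexc : ContinuousOn ex (Ici 0) := fun s hs => ((hex s hs).continuousAt).continuousWithinAt
  have hgc : ContinuousOn g (Ici 0) := (continuous_quad Q).comp_continuousOn hexc
  -- positivity constants
  obtain ⟨cP, hcP, hPlow⟩ := posdef_lower hP
  obtain ⟨cQ, hcQ, hQlow⟩ := posdef_lower hQ
  obtain ⟨cG, hcG, hGlow⟩ := posdef_lower hG
  have hg0 : ∀ t, 0 ≤ g t := by
    intro t
    have h := hQlow (ex t)
    have h2 : (0:ℝ) ≤ cQ * ‖ex t‖ ^ 2 := by positivity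
    exact le_trans h2 h
  have htracednn : ∀ t, 0 ≤ ∑ j, (fun i => Ξ t i j) ⬝ᵥ Γ⁻¹ *ᵥ (fun i => Ξ t i j) :=
    fun t => Finset.sum_nonneg fun j _ => le_trans (by positivity) (hGlow _)
  have hPq_nn : ∀ t, 0 ≤ ex t ⬝ᵥ P *ᵥ ex t := fun t => le_trans (by positivity) (hPlow _)
  have hV0nn : ∀ t, 0 ≤ V t := fun t => add_nonneg (hPq_nn t) (htracednn t)
  -- fundamental theorem of calculus for V
  have hFTC : ∀ s t, 0 ≤ s → s ≤ t → (∫ x in s..t, g x) = V s - V t := by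
    intro s t hs hst
    have hsub : uIcc s t ⊆ Ici 0 := by
      rw [uIcc_of_le hst]
      exact fun x hx => hs.trans hx.1
    have hderiv : ∀ x ∈ uIcc s t, HasDerivAt V (-(g x)) x := fun x hx => hVderiv x (hsub hx)
    have hint : IntervalIntegrable (fun x => -(g x)) MeasureTheory.volume s t :=
      ((hgc.mono hsub).neg).intervalIntegrable
    have h := integral_eq_sub_of_hasDerivAt hderiv hint
    rw [integral_neg] at h
    linarith
  have hVle : ∀ t, 0 ≤ t → V t ≤ V 0 := by
    intro t ht
    have h := hFTC 0 t le_rfl ht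
    have hnn : 0 ≤ ∫ x in (0:ℝ)..t, g x := integral_nonneg ht fun u _ => hg0 u
    linarith
  -- uniform bounds
  have hexb : ∀ t, 0 ≤ t → ‖ex t‖ ≤ Real.sqrt (V 0 / cP) := by
    intro t ht
    have h1 : cP * ‖ex t‖ ^ 2 ≤ V 0 := by
      have ha := hPlow (ex t)
      have hb := htracednn t
      have hc := hVle t ht
      have hstep : ex t ⬝ᵥ P *ᵥ ex t ≤ V t := by
        have hVt : V t = ex t ⬝ᵥ P *ᵥ ex t
            + ∑ j, (fun i => Ξ t i j) ⬝ᵥ Γ⁻¹ *ᵥ (fun i => Ξ t i j) := rfl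
        rw [hVt]
        exact le_add_of_nonneg_right hb
      exact le_trans (le_trans ha hstep) hc
    have h4 : ‖ex t‖ ^ 2 ≤ V 0 / cP := (le_div_iff₀ hcP).2 (by linarith)
    calc ‖ex t‖ = Real.sqrt (‖ex t‖ ^ 2) := (Real.sqrt_sq (norm_nonneg _)).symm
      _ ≤ _ := Real.sqrt_le_sqrt h4
  have hΞb : ∀ t, 0 ≤ t → ∀ i j, |Ξ t i j| ≤ Real.sqrt (V 0 / cG) := by
    intro t ht i j
    have hcol : cG * ‖(fun i => Ξ t i j)‖ ^ 2 ≤ V 0 := by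
      have h1 := hGlow (fun i => Ξ t i j)
      have h2 : (fun i => Ξ t i j) ⬝ᵥ Γ⁻¹ *ᵥ (fun i => Ξ t i j)
          ≤ ∑ j', (fun i => Ξ t i j') ⬝ᵥ Γ⁻¹ *ᵥ (fun i => Ξ t i j') :=
        Finset.single_le_sum (f := fun j' => (fun i => Ξ t i j') ⬝ᵥ Γ⁻¹ *ᵥ (fun i => Ξ t i j'))
          (fun j' _ => le_trans (by positivity) (hGlow _)) (Finset.mem_univ j)
      have h3 := hVle t ht
      have h4 := hPq_nn t
      have hstep : (∑ j', (fun i => Ξ t i j') ⬝ᵥ Γ⁻¹ *ᵥ (fun i => Ξ t i j')) ≤ V t := by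
        have hVt : V t = ex t ⬝ᵥ P *ᵥ ex t
            + ∑ j', (fun i => Ξ t i j') ⬝ᵥ Γ⁻¹ *ᵥ (fun i => Ξ t i j') := rfl
        rw [hVt]
        exact le_add_of_nonneg_left h4
      exact le_trans (le_trans h1 h2) (le_trans hstep h3)
    have h5 : ‖(fun i => Ξ t i j)‖ ^ 2 ≤ V 0 / cG := (le_div_iff₀ hcG).2 (by linarith)
    have h6 : |Ξ t i j| ≤ ‖(fun i => Ξ t i j)‖ := by
      simpa [Real.norm_eq_abs] using norm_le_pi_norm (fun i => Ξ t i j) i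
    calc |Ξ t i j| ≤ ‖(fun i => Ξ t i j)‖ := h6
      _ = Real.sqrt (‖(fun i => Ξ t i j)‖ ^ 2) := (Real.sqrt_sq (norm_nonneg _)).symm
      _ ≤ _ := Real.sqrt_le_sqrt h5
  have hwb : ∀ t, 0 ≤ t → ‖Ξ t *ᵥ η t‖ ≤ (↑m * ↑p * Real.sqrt (V 0 / cG)) * Cb := by
    intro t ht
    have h1 := mulVec_norm_bound (Ξ t) (η t)
    have h2 : (∑ k, ∑ l, |Ξ t k l|) ≤ ↑m * ↑p * Real.sqrt (V 0 / cG) := by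
      calc (∑ k, ∑ l, |Ξ t k l|)
          ≤ ∑ _k : Fin m, ∑ _l : Fin p, Real.sqrt (V 0 / cG) :=
            Finset.sum_le_sum fun k _ => Finset.sum_le_sum fun l _ => hΞb t ht k l
        _ = ↑m * ↑p * Real.sqrt (V 0 / cG) := by
            simp [Finset.sum_const, Finset.card_univ]
            ring
    exact h1.trans (mul_le_mul h2 (hCb t ht) (norm_nonneg _) (by positivity))
  -- abstract bounds
  obtain ⟨Mx, hMx0, hMx⟩ : ∃ Mx, 0 ≤ Mx ∧ ∀ t, 0 ≤ t → ‖ex t‖ ≤ Mx :=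
    ⟨_, Real.sqrt_nonneg _, hexb⟩
  obtain ⟨Mw, hMw0, hMw⟩ : ∃ Mw, 0 ≤ Mw ∧ ∀ t, 0 ≤ t → ‖Ξ t *ᵥ η t‖ ≤ Mw :=
    ⟨_, by positivity, hwb⟩
  obtain ⟨Me, hMe0, hMe⟩ : ∃ Me, 0 ≤ Me ∧ ∀ t, 0 ≤ t →
      ‖A *ᵥ ex t + B *ᵥ (Ξ t *ᵥ η t)‖ ≤ Me := by
    refine ⟨(∑ k, ∑ l, |A k l|) * Mx + (∑ k, ∑ l, |B k l|) * Mw,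
      add_nonneg (mul_nonneg (by positivity) hMx0) (mul_nonneg (by positivity) hMw0),
      fun t ht => ?_⟩
    refine (norm_add_le _ _).trans (add_le_add ?_ ?_)
    · exact (mulVec_norm_bound A (ex t)).trans
        (mul_le_mul_of_nonneg_left (hMx t ht) (by positivity))
    · exact (mulVec_norm_bound B (Ξ t *ᵥ η t)).trans
        (mul_le_mul_of_nonneg_left (hMw t ht) (by positivity))
  obtain ⟨K0, hK00, hDgb⟩ : ∃ K0, 0 ≤ K0 ∧ ∀ t, 0 ≤ t →
      |(A *ᵥ ex t + B *ᵥ (Ξ t *ᵥ η t)) ⬝ᵥ Q *ᵥ ex t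
        + ex t ⬝ᵥ Q *ᵥ (A *ᵥ ex t + B *ᵥ (Ξ t *ᵥ η t))| ≤ K0 := by
    refine ⟨↑n * ((∑ k, ∑ l, |Q k l|) * Me * Mx) + ↑n * ((∑ k, ∑ l, |Q k l|) * Mx * Me),
      add_nonneg (mul_nonneg (by positivity)
        (mul_nonneg (mul_nonneg (by positivity) hMe0) hMx0))
      (mul_nonneg (by positivity)
        (mul_nonneg (mul_nonneg (by positivity) hMx0) hMe0)),
      fun t ht => ?_⟩
    refine (abs_add_le _ _).trans (add_le_add ?_ ?_)
    · refine (dot_mulVec_bound Q _ _).trans (mul_le_mul_of_nonneg_left ?_ (by positivity))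
      exact mul_le_mul (mul_le_mul_of_nonneg_left (hMe t ht) (by positivity))
        (hMx t ht) (norm_nonneg _) (mul_nonneg (by positivity) hMe0)
    · refine (dot_mulVec_bound Q _ _).trans (mul_le_mul_of_nonneg_left ?_ (by positivity))
      exact mul_le_mul (mul_le_mul_of_nonneg_left (hMx t ht) (by positivity))
        (hMe t ht) (norm_nonneg _) (mul_nonneg (by positivity) hMx0)
  -- Lipschitz bound for g on [0,∞)
  have hglip : ∀ s t, 0 ≤ s → 0 ≤ t → |g t - g s| ≤ (K0 + 1) * |t - s| := by
    intro s t hs ht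
    have h := Convex.norm_image_sub_le_of_norm_hasDerivWithin_le
      (f := g)
      (f' := fun x => (A *ᵥ ex x + B *ᵥ (Ξ x *ᵥ η x)) ⬝ᵥ Q *ᵥ ex x
        + ex x ⬝ᵥ Q *ᵥ (A *ᵥ ex x + B *ᵥ (Ξ x *ᵥ η x)))
      (s := Ici (0:ℝ)) (C := K0 + 1)
      (fun x hx => (hasDerivAt_quad Q (hex x hx)).hasDerivWithinAt)
      (fun x hx => by
        rw [Real.norm_eq_abs]
        exact (hDgb x hx).trans (by linarith))
      (convex_Ici 0) hs ht
    simpa [Real.norm_eq_abs] using h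
  -- Barbalat
  have hgten : Tendsto g atTop (nhds 0) :=
    barbalat g V (K0 + 1) (by linarith) (fun t _ => hg0 t) hglip
      (fun t _ => hV0nn t) hFTC
  -- conclude
  have hnorm : Tendsto (fun t => ‖ex t‖) atTop (nhds 0) := by
    have h1 : Tendsto (fun t => g t / cQ) atTop (nhds 0) := by
      simpa using hgten.div_const cQ
    have h2 : Tendsto (fun t => Real.sqrt (g t / cQ)) atTop (nhds 0) := by
      have := (Real.continuous_sqrt.tendsto 0).comp h1
      simpa [Function.comp_def] using this
    refine squeeze_zero' (Eventually.of_forall fun t => norm_nonneg _) ?_ h2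
    filter_upwards [eventually_ge_atTop (0:ℝ)] with t ht
    have h3 : ‖ex t‖ ^ 2 ≤ g t / cQ := (le_div_iff₀ hcQ).2 (by
      have h4 := hQlow (ex t)
      have h5 : g t = ex t ⬝ᵥ Q *ᵥ ex t := rfl
      linarith)
    calc ‖ex t‖ = Real.sqrt (‖ex t‖ ^ 2) := (Real.sqrt_sq (norm_nonneg _)).symm
      _ ≤ _ := Real.sqrt_le_sqrt h3
  have hex0 : Tendsto ex atTop (nhds 0) := tendsto_zero_iff_norm_tendsto_zero.mpr hnorm
  refine ⟨hex0, ?_⟩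
  have hcont : Continuous (Matrix.mulVecLin C) := LinearMap.continuous_of_finiteDimensional _
  have h := (hcont.tendsto 0).comp hex0
  simpa [Function.comp_def, Matrix.mulVecLin_apply, map_zero] using h
end
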